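/- arXiv:2306.05574 — 3 statements merged into one kernel-verified Lean document; each statement's English description precedes it below -/
import Mathlib

section
/- In a 2-connected signed graph G, an edge e appears in cycles of both positive and negative sign if and only if G - e is unbalanced (contains a negative cycle). -/
/-- A finite loopless signed multigraph. -/
structure SGraph : Type 1 where
  V : Type
  E : Type
  [fintV : Fintype V]
  [decV : DecidableEq V]
  [fintE : Fintype E]
  [decE : DecidableEq E]
  ends : E → Sym2 V
  loopless : ∀ e, ¬ (ends e).IsDiag
  sgn : E → ℤˣ

attribute [instance] SGraph.fintV SGraph.decV SGraph.fintE SGraph.decE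

namespace SGraph

variable (G : SGraph)

/-- Degree of a vertex in an edge set. -/
noncomputable def deg (S : Set G.E) (v : G.V) : ℕ := {e ∈ S | v ∈ G.ends e}.ncard

/-- The sign of an edge set: the product of the signs of its edges. -/
noncomputable def signOf (S : Set G.E) : ℤˣ := ∏ᶠ e ∈ S, G.sgn e

/-- An edge set is connected: any two of its edges are linked by a chain of
edges of the set, consecutive ones sharing a vertex. -/
def conn (S : Set G.E) : Prop :=
  ∀ e ∈ S, ∀ f ∈ S,
    Relation.ReflTransGen (fun a b => a ∈ S ∧ b ∈ S ∧ ∃ v, v ∈ G.ends a ∧ v ∈ G.ends b) e f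

/-- An edge set is (the edge set of) a cycle: nonempty, every vertex has degree 0 or 2,
and it is connected. -/
def IsCycle (S : Set G.E) : Prop :=
  S.Nonempty ∧ (∀ v, G.deg S v = 0 ∨ G.deg S v = 2) ∧ G.conn S

/-- The vertices covered by an edge set. -/
def verts (S : Set G.E) : Set G.V := {v | ∃ e ∈ S, v ∈ G.ends e}

/-- Two edges are untied: there are cycles of both signs through both edges. -/
def Untied (e₁ e₂ : G.E) : Prop :=
  (∃ C, G.IsCycle C ∧ e₁ ∈ C ∧ e₂ ∈ C ∧ G.signOf C = 1) ∧
  (∃ C, G.IsCycle C ∧ e₁ ∈ C ∧ e₂ ∈ C ∧ G.signOf C = -1)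

/-- Two edges are tied: all cycles through both have the same sign. -/
def Tied (e₁ e₂ : G.E) : Prop :=
  ∀ C C', G.IsCycle C → G.IsCycle C' → e₁ ∈ C → e₂ ∈ C → e₁ ∈ C' → e₂ ∈ C' →
    G.signOf C = G.signOf C'

/-- A signed graph is balanced if every cycle is positive. -/
def Balanced : Prop := ∀ C, G.IsCycle C → G.signOf C = 1

/-- Reachability between vertices avoiding a forbidden vertex set `S`. -/
def ReachOutside (S : Set G.V) : G.V → G.V → Prop :=
  Relation.ReflTransGen (fun a b => a ∉ S ∧ b ∉ S ∧ ∃ e, G.ends e = s(a, b))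

/-- The graph minus the vertex set `S` is connected. -/
def ConnOutside (S : Set G.V) : Prop :=
  ∀ u v : G.V, u ∉ S → v ∉ S → G.ReachOutside S u v

/-- `k`-connectivity: more than `k` vertices, and removing fewer than `k` vertices
leaves a connected graph. -/
def KConnected (k : ℕ) : Prop :=
  k + 1 ≤ Fintype.card G.V ∧ ∀ S : Set G.V, S.ncard < k → G.ConnOutside S

/-- `P` is the edge set of a path from `a` to `b` (possibly trivial when `a = b`). -/
def IsPath (P : Set G.E) (a b : G.V) : Prop :=
  (a = b ∧ P = ∅) ∨
  (a ≠ b ∧ P.Nonempty ∧ G.deg P a = 1 ∧ G.deg P b = 1 ∧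
    (∀ v, v ≠ a → v ≠ b → G.deg P v = 0 ∨ G.deg P v = 2) ∧ G.conn P)

/-- The vertices of a path from `a` to `b`, including its ends. -/
def pverts (P : Set G.E) (a b : G.V) : Set G.V := G.verts P ∪ {a, b}

/-- An edge set is an edge-cut `δ(X)`. -/
def EdgeCut (S : Set G.E) : Prop :=
  ∃ X : Set G.V, ∀ e, e ∈ S ↔ ∃ a b, G.ends e = s(a, b) ∧ a ∈ X ∧ b ∉ X

/-- A signed graph is simple if no two distinct edges are parallel. -/
def Simple : Prop := ∀ e f : G.E, G.ends e = G.ends f → e = f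

end SGraph


/-! ### Auxiliary walk library -/

namespace SGraph

variable {G : SGraph}

/-- Walks in a signed multigraph, recording the edges used. -/
inductive W (G : SGraph) : G.V → G.V → Type
  | nil (u : G.V) : W G u u
  | cons {u v w : G.V} (e : G.E) (he : G.ends e = s(u, v)) (p : W G v w) : W G u w

namespace W

def support {u v : G.V} : W G u v → List G.V
  | .nil u => [u]
  | .cons (u := u) _ _ p => u :: p.support

def edges {u v : G.V} : W G u v → List G.E
  | .nil _ => []
  | .cons e _ p => e :: p.edges

@[simp] lemma support_nil (u : G.V) : (nil u : W G u u).support = [u] := rfl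
@[simp] lemma support_cons {u v w : G.V} (e : G.E) (he : G.ends e = s(u, v)) (p : W G v w) :
    (cons e he p).support = u :: p.support := rfl
@[simp] lemma edges_nil (u : G.V) : (nil u : W G u u).edges = [] := rfl
@[simp] lemma edges_cons {u v w : G.V} (e : G.E) (he : G.ends e = s(u, v)) (p : W G v w) :
    (cons e he p).edges = e :: p.edges := rfl

lemma support_ne_nil {u v : G.V} (p : W G u v) : p.support ≠ [] := by
  cases p <;> simp

lemma support_eq_cons {u v : G.V} (p : W G u v) : p.support = u :: p.support.tail := by
  cases p <;> simp

@[simp] lemma start_mem_support {u v : G.V} (p : W G u v) : u ∈ p.support := by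
  rw [support_eq_cons]; exact List.mem_cons_self

@[simp] lemma end_mem_support {u v : G.V} (p : W G u v) : v ∈ p.support := by
  induction p with
  | nil u => simp
  | cons e he p ih => simp [ih]

lemma end_mem_support_tail {u v : G.V} (p : W G u v) (h : u ≠ v) : v ∈ p.support.tail := by
  cases p with
  | nil => exact absurd rfl h
  | cons e he p => simpa using p.end_mem_support

def append {u v w : G.V} : W G u v → W G v w → W G u w
  | .nil _, q => q
  | .cons e he p, q => .cons e he (p.append q)

@[simp] lemma nil_append {u v : G.V} (q : W G u v) : (nil u).append q = q := rfl
@[simp] lemma cons_append {u v w x : G.V} (e : G.E) (he : G.ends e = s(u, v))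
    (p : W G v w) (q : W G w x) : (cons e he p).append q = cons e he (p.append q) := rfl

@[simp] lemma edges_append {u v w : G.V} (p : W G u v) (q : W G v w) :
    (p.append q).edges = p.edges ++ q.edges := by
  induction p with
  | nil => simp
  | cons e he p ih => simp [ih]

@[simp] lemma support_append {u v w : G.V} (p : W G u v) (q : W G v w) :
    (p.append q).support = p.support ++ q.support.tail := by
  induction p with
  | nil u => simpa using q.support_eq_cons
  | cons e he p ih => simp [ih]

def reverse {u v : G.V} : W G u v → W G v u
  | .nil u => .nil u
  | .cons e he p => p.reverse.append (.cons e (by rw [he, Sym2.eq_swap]) (.nil _))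

@[simp] lemma edges_reverse {u v : G.V} (p : W G u v) : p.reverse.edges = p.edges.reverse := by
  induction p with
  | nil => rfl
  | cons e he p ih => simp [reverse, ih]

@[simp] lemma support_reverse {u v : G.V} (p : W G u v) :
    p.reverse.support = p.support.reverse := by
  induction p with
  | nil => rfl
  | cons e he p ih => simp [reverse, ih, List.reverse_cons]

lemma mem_support_of_mem_ends {u v : G.V} (p : W G u v) {f : G.E} {x : G.V}
    (hf : f ∈ p.edges) (hx : x ∈ G.ends f) : x ∈ p.support := by
  induction p with
  | nil => simp at hf
  | cons e he p ih =>
    rcases List.mem_cons.mp hf with rfl | hf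
    · rw [he, Sym2.mem_iff] at hx
      rcases hx with rfl | rfl
      · simp
      · simp [p.start_mem_support]
    · simp [ih hf]

lemma exists_edge_of_mem_tail {u v : G.V} (p : W G u v) {x : G.V}
    (hx : x ∈ p.support.tail) : ∃ f ∈ p.edges, x ∈ G.ends f := by
  induction p with
  | nil => simp at hx
  | cons e he p ih =>
    simp only [support_cons, List.tail_cons] at hx
    rw [p.support_eq_cons] at hx
    rcases List.mem_cons.mp hx with rfl | hx
    · exact ⟨e, by simp, by rw [he]; simp⟩
    · obtain ⟨f, hf, hxf⟩ := ih hx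
      exact ⟨f, by simp [hf], hxf⟩

lemma exists_edge_of_mem_support {u v : G.V} (p : W G u v) (hne : p.edges ≠ [])
    {x : G.V} (hx : x ∈ p.support) : ∃ f ∈ p.edges, x ∈ G.ends f := by
  rw [p.support_eq_cons] at hx
  rcases List.mem_cons.mp hx with rfl | hx
  · cases p with
    | nil => simp at hne
    | cons e he p => exact ⟨e, by simp, by rw [he]; simp⟩
  · exact p.exists_edge_of_mem_tail hx

lemma edges_nodup_of_support_nodup {u v : G.V} (p : W G u v)
    (h : p.support.Nodup) : p.edges.Nodup := by
  induction p with
  | nil => simp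
  | cons e he p ih =>
    simp only [support_cons, List.nodup_cons] at h
    refine List.nodup_cons.mpr ⟨fun hmem => ?_, ih h.2⟩
    exact h.1 (p.mem_support_of_mem_ends hmem (by rw [he]; simp))

def takeUntil {u v : G.V} : ∀ (p : W G u v) (x : G.V), x ∈ p.support → W G u x
  | .nil u, x, h => by rw [show x = u by simpa using h]; exact nil u
  | .cons (u := u) e he p, x, h =>
    if hx : u = x then by rw [← hx]; exact nil u
    else cons e he (p.takeUntil x (by
      rcases List.mem_cons.mp h with rfl | h
      · exact (hx rfl).elim
      · exact h))

def dropUntil {u v : G.V} : ∀ (p : W G u v) (x : G.V), x ∈ p.support → W G x v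
  | .nil u, x, h => by rw [show x = u by simpa using h]; exact nil u
  | .cons (u := u) e he p, x, h =>
    if hx : u = x then by rw [← hx]; exact cons e he p
    else p.dropUntil x (by
      rcases List.mem_cons.mp h with rfl | h
      · exact (hx rfl).elim
      · exact h)

lemma take_spec {u v : G.V} (p : W G u v) {x : G.V} (h : x ∈ p.support) :
    (p.takeUntil x h).append (p.dropUntil x h) = p := by
  induction p with
  | nil u =>
    have hx : x = u := by simpa using h
    subst hx; rfl
  | @cons a b c e he p ih =>
    by_cases hx : a = x
    · subst hx; simp only [takeUntil, dropUntil, dif_pos]; rfl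
    · simp only [takeUntil, dropUntil, dif_neg hx, cons_append]
      rw [ih]


def ES {u v : G.V} (p : W G u v) : Set G.E := {e | e ∈ p.edges}

@[simp] lemma mem_ES {u v : G.V} {p : W G u v} {e : G.E} : e ∈ p.ES ↔ e ∈ p.edges := Iff.rfl

end W

lemma ne_of_ends {e : G.E} {a b : G.V} (he : G.ends e = s(a, b)) : a ≠ b := by
  intro hab
  exact G.loopless e (by rw [he, hab]; exact Sym2.mk_isDiag_iff.mpr rfl)

lemma ends_rep (g : G.E) : ∃ a b, G.ends g = s(a, b) ∧ a ≠ b := by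
  obtain ⟨a, b, hab⟩ : ∃ a b, G.ends g = s(a, b) := by
    induction (G.ends g) using Sym2.ind with
    | _ x y => exact ⟨x, y, rfl⟩
  exact ⟨a, b, hab, G.ne_of_ends hab⟩

lemma setOf_mem_list {α : Type*} [DecidableEq α] (l : List α) :
    {x | x ∈ l} = ↑l.toFinset := by ext x; simp

lemma ncard_setOf_mem_list {α : Type*} [DecidableEq α] (l : List α) (hl : l.Nodup) :
    {x | x ∈ l}.ncard = l.length := by
  rw [setOf_mem_list, Set.ncard_coe_finset, List.toFinset_card_of_nodup hl]

lemma deg_list (l : List G.E) (hl : l.Nodup) (x : G.V) :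
    G.deg {e | e ∈ l} x = l.countP (fun e => decide (x ∈ G.ends e)) := by
  have h1 : {e ∈ {e | e ∈ l} | x ∈ G.ends e} =
      {e | e ∈ l.filter (fun e => decide (x ∈ G.ends e))} := by
    ext f; simp [List.mem_filter]
  rw [deg, h1, ncard_setOf_mem_list _ (hl.filter _), ← List.countP_eq_length_filter]

lemma signOf_list (l : List G.E) (hl : l.Nodup) :
    G.signOf {e | e ∈ l} = (l.map G.sgn).prod := by
  rw [signOf, setOf_mem_list, finprod_mem_coe_finset, List.prod_toFinset _ hl]

namespace W

lemma countP_eq_zero_of_not_mem_support {u v : G.V} (p : W G u v) {x : G.V}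
    (hx : x ∉ p.support) : p.edges.countP (fun e => decide (x ∈ G.ends e)) = 0 := by
  rw [List.countP_eq_zero]
  intro f hf
  simp only [decide_eq_true_eq]
  exact fun hxf => hx (p.mem_support_of_mem_ends hf hxf)

end W

lemma countP_cons_ends {x a b : G.V} {e : G.E} (he : G.ends e = s(a, b)) (l : List G.E) :
    (e :: l).countP (fun f => decide (x ∈ G.ends f)) =
      l.countP (fun f => decide (x ∈ G.ends f)) + (if x = a ∨ x = b then 1 else 0) := by
  rw [List.countP_cons]
  congr 1
  have h : (x ∈ G.ends e) ↔ (x = a ∨ x = b) := by rw [he, Sym2.mem_iff]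
  by_cases hc : x = a ∨ x = b
  · rw [if_pos hc, if_pos (by simpa using h.mpr hc)]
  · rw [if_neg hc, if_neg (by simpa using fun hcc => hc (h.mp hcc))]

namespace W

lemma count_aux {u v : G.V} (p : W G u v) (hp : p.support.Nodup) {x : G.V}
    (hx : x ∈ p.support) :
    p.edges.countP (fun e => decide (x ∈ G.ends e))
      + (if x = u then 1 else 0) + (if x = v then 1 else 0) = 2 := by
  induction p with
  | nil u =>
    have hxu : x = u := by simpa using hx
    simp [hxu]
  | @cons a b c e he p ih =>
    have hab : a ≠ b := G.ne_of_ends he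
    simp only [support_cons, List.nodup_cons] at hp
    rw [edges_cons, G.countP_cons_ends he]
    rcases List.mem_cons.mp hx with rfl | hx'
    · have h0 : p.edges.countP (fun e => decide (x ∈ G.ends e)) = 0 :=
        p.countP_eq_zero_of_not_mem_support hp.1
      have hxc : x ≠ c := fun h => hp.1 (h ▸ p.end_mem_support)
      rw [h0, if_pos rfl, if_neg hxc, if_pos (Or.inl rfl)]
    · have hxa : x ≠ a := fun h => hp.1 (h ▸ hx')
      have key := ih hp.2 hx'
      rw [if_neg hxa]
      by_cases hxb : x = b
      · rw [if_pos (Or.inr hxb)]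
        rw [if_pos hxb] at key
        omega
      · rw [if_neg (by tauto)]
        rw [if_neg hxb] at key
        omega

lemma countP_parity {u v : G.V} (p : W G u v) (x : G.V) :
    (p.edges.countP (fun e => decide (x ∈ G.ends e))
      + (if x = u then 1 else 0) + (if x = v then 1 else 0)) % 2 = 0 := by
  induction p with
  | nil u => by_cases h : x = u <;> simp [h]
  | @cons a b c e he p ih =>
    have hab : a ≠ b := G.ne_of_ends he
    rw [edges_cons, G.countP_cons_ends he]
    by_cases hxa : x = a <;> by_cases hxb : x = b
    · exact absurd (hxa ▸ hxb.symm) hab.symm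
    · rw [if_pos (Or.inl hxa), if_pos hxa]
      rw [if_neg hxb] at ih
      omega
    · rw [if_pos (Or.inr hxb), if_neg hxa]
      rw [if_pos hxb] at ih
      omega
    · rw [if_neg (by tauto), if_neg hxa]
      rw [if_neg hxb] at ih
      omega

/-- A closed walk which is a (combinatorial) cycle. -/
def IsCirc {u : G.V} (p : W G u u) : Prop :=
  p.edges ≠ [] ∧ p.edges.Nodup ∧ p.support.tail.Nodup

lemma IsCirc.enodup {u : G.V} {p : W G u u} (h : p.IsCirc) : p.edges.Nodup := h.2.1
lemma IsCirc.nonnil {u : G.V} {p : W G u u} (h : p.IsCirc) : p.edges ≠ [] := h.1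
lemma IsCirc.snodup {u : G.V} {p : W G u u} (h : p.IsCirc) : p.support.tail.Nodup := h.2.2

lemma IsCirc.deg {u : G.V} {p : W G u u} (h : p.IsCirc) (x : G.V) :
    G.deg p.ES x = if x ∈ p.support then 2 else 0 := by
  have hdl : G.deg p.ES x = p.edges.countP (fun e => decide (x ∈ G.ends e)) :=
    G.deg_list p.edges h.enodup x
  by_cases hx : x ∈ p.support
  · rw [if_pos hx, hdl]
    cases p with
    | nil => exact absurd rfl h.nonnil
    | @cons _ b _ e he p =>
      have hab : u ≠ b := G.ne_of_ends he
      have hsn : p.support.Nodup := h.snodup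
      rw [edges_cons, G.countP_cons_ends he]
      rcases List.mem_cons.mp hx with rfl | hx'
      · have key := p.count_aux hsn p.end_mem_support
        rw [if_neg hab, if_pos rfl] at key
        rw [if_pos (Or.inl rfl)]
        omega
      · have key := p.count_aux hsn hx'
        by_cases hxu : x = u <;> by_cases hxb : x = b
        · exact absurd (hxu ▸ hxb.symm) hab.symm
        · rw [if_pos (Or.inl hxu)]
          rw [if_neg hxb, if_pos hxu] at key
          omega
        · rw [if_pos (Or.inr hxb)]
          rw [if_pos hxb, if_neg hxu] at key
          omega
        · rw [if_neg (by tauto)]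
          rw [if_neg hxb, if_neg hxu] at key
          omega
  · rw [if_neg hx, hdl]
    exact p.countP_eq_zero_of_not_mem_support hx

end W

namespace W

lemma edges_take_drop {u v : G.V} (p : W G u v) {x : G.V} (h : x ∈ p.support) :
    p.edges = (p.takeUntil x h).edges ++ (p.dropUntil x h).edges := by
  conv_lhs => rw [← p.take_spec h]
  rw [edges_append]

lemma support_take_drop {u v : G.V} (p : W G u v) {x : G.V} (h : x ∈ p.support) :
    p.support = (p.takeUntil x h).support ++ (p.dropUntil x h).support.tail := by
  conv_lhs => rw [← p.take_spec h]
  rw [support_append]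

lemma edges_takeUntil_subset {u v : G.V} (p : W G u v) {x : G.V} (h : x ∈ p.support) :
    ∀ f ∈ (p.takeUntil x h).edges, f ∈ p.edges := by
  intro f hf; rw [p.edges_take_drop h]; exact List.mem_append_left _ hf

lemma edges_dropUntil_subset {u v : G.V} (p : W G u v) {x : G.V} (h : x ∈ p.support) :
    ∀ f ∈ (p.dropUntil x h).edges, f ∈ p.edges := by
  intro f hf; rw [p.edges_take_drop h]; exact List.mem_append_right _ hf

lemma length_takeUntil_le {u v : G.V} (p : W G u v) {x : G.V} (h : x ∈ p.support) :
    (p.takeUntil x h).edges.length ≤ p.edges.length := by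
  have := congrArg List.length (p.edges_take_drop h)
  rw [List.length_append] at this
  omega

/-- Chain connectivity: all edges of a walk are linked to an edge sharing the start. -/
lemma conn_chain_head {S : Set G.E} :
    ∀ {a c : G.V} (q : W G a c), (∀ f ∈ q.edges, f ∈ S) → ∀ {e : G.E}, e ∈ S →
      a ∈ G.ends e → ∀ f ∈ q.edges,
      Relation.ReflTransGen (fun a b => a ∈ S ∧ b ∈ S ∧ ∃ x, x ∈ G.ends a ∧ x ∈ G.ends b) e f := by
  intro a c q
  induction q with
  | nil => intro _ _ _ _ f hf; simp at hf
  | @cons a b c e' he' q ih =>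
    intro hsub e heS ha f hf
    have he'S : e' ∈ S := hsub e' (by simp)
    have hstep : Relation.ReflTransGen
        (fun a b => a ∈ S ∧ b ∈ S ∧ ∃ x, x ∈ G.ends a ∧ x ∈ G.ends b) e e' :=
      Relation.ReflTransGen.single ⟨heS, he'S, a, ha, by rw [he']; simp⟩
    rcases List.mem_cons.mp hf with rfl | hf'
    · exact hstep
    · exact hstep.trans (ih (fun g hg => hsub g (by simp [hg])) he'S
        (by rw [he']; simp) f hf')

lemma conn_walk {u v : G.V} (p : W G u v) {S : Set G.E} (hsub : ∀ f ∈ p.edges, f ∈ S) :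
    ∀ f ∈ p.edges, ∀ g ∈ p.edges,
      Relation.ReflTransGen (fun a b => a ∈ S ∧ b ∈ S ∧ ∃ x, x ∈ G.ends a ∧ x ∈ G.ends b) f g := by
  have hsymm : Symmetric (fun (a b : G.E) => a ∈ S ∧ b ∈ S ∧ ∃ x, x ∈ G.ends a ∧ x ∈ G.ends b) :=
    fun a b ⟨h1, h2, x, h3, h4⟩ => ⟨h2, h1, x, h4, h3⟩
  have hsymm' := fun {a b : G.E} (h : Relation.ReflTransGen _ a b) =>
    (@Relation.ReflTransGen.symmetric _ _ ⟨fun x y => @hsymm x y⟩).symm a b h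
  cases p with
  | nil => intro f hf; simp at hf
  | @cons a b c e he p =>
    intro f hf g hg
    have heS : e ∈ S := hsub e (by simp)
    have hchain := conn_chain_head (S := S) p (fun x hx => hsub x (by simp [hx])) heS
      (by rw [he]; simp)
    rcases List.mem_cons.mp hf with rfl | hf' <;> rcases List.mem_cons.mp hg with rfl | hg'
    · exact Relation.ReflTransGen.refl
    · exact hchain g hg'
    · exact hsymm' (hchain f hf')
    · exact (hsymm' (hchain f hf')).trans (hchain g hg')

lemma IsCirc.isCycle {u : G.V} {p : W G u u} (h : p.IsCirc) : G.IsCycle p.ES := by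
  refine ⟨?_, ?_, ?_⟩
  · rcases List.exists_mem_of_ne_nil _ h.nonnil with ⟨f, hf⟩
    exact ⟨f, hf⟩
  · intro x
    rw [h.deg x]
    by_cases hx : x ∈ p.support <;> simp [hx]
  · intro f hf g hg
    exact p.conn_walk (fun _ hx => hx) f hf g hg

lemma IsCirc.verts {u : G.V} {p : W G u u} (h : p.IsCirc) :
    G.verts p.ES = {x | x ∈ p.support} := by
  ext x
  constructor
  · rintro ⟨f, hf, hxf⟩
    exact p.mem_support_of_mem_ends hf hxf
  · intro hx
    obtain ⟨f, hf, hxf⟩ := p.exists_edge_of_mem_support h.nonnil hx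
    exact ⟨f, hf, hxf⟩

lemma signOf_ES {u v : G.V} (p : W G u v) (h : p.edges.Nodup) :
    G.signOf p.ES = (p.edges.map G.sgn).prod :=
  G.signOf_list p.edges h

end W

lemma length_le_ncard {α : Type*} [DecidableEq α] {l : List α} {S : Set α} [Finite α]
    (hl : l.Nodup) (hsub : ∀ x ∈ l, x ∈ S) : l.length ≤ S.ncard := by
  rw [← ncard_setOf_mem_list l hl]
  exact Set.ncard_le_ncard hsub (Set.toFinite S)

lemma exists_fresh_edge {S : Set G.E} (hev : ∀ x, G.deg S x % 2 = 0) {u v : G.V}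
    (p : W G u v) (hnd : p.edges.Nodup) (hsub : ∀ f ∈ p.edges, f ∈ S) (huv : u ≠ v) :
    ∃ f ∈ S, f ∉ p.edges ∧ v ∈ G.ends f := by
  have hpar := p.countP_parity v
  rw [if_neg (Ne.symm huv), if_pos rfl] at hpar
  set c := p.edges.countP (fun e => decide (v ∈ G.ends e)) with hc
  have hodd : c % 2 = 1 := by omega
  by_contra hcon
  push_neg at hcon
  -- every edge of S incident to v is in p.edges
  have hsub2 : {e ∈ S | v ∈ G.ends e} ⊆ {e | e ∈ p.edges.filter (fun e => decide (v ∈ G.ends e))} := by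
    rintro f ⟨hfS, hfv⟩
    rcases em (f ∈ p.edges) with hf | hf
    · simp [List.mem_filter, hf, hfv]
    · exact absurd hfv (hcon f hfS hf)
  have hsub3 : {e | e ∈ p.edges.filter (fun e => decide (v ∈ G.ends e))} ⊆ {e ∈ S | v ∈ G.ends e} := by
    intro f hf
    rw [Set.mem_setOf_eq, List.mem_filter] at hf
    exact ⟨hsub f hf.1, by simpa using hf.2⟩
  have heq : {e ∈ S | v ∈ G.ends e} = {e | e ∈ p.edges.filter (fun e => decide (v ∈ G.ends e))} :=
    Set.Subset.antisymm hsub2 hsub3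
  have hdeg : G.deg S v = c := by
    rw [deg, heq, ncard_setOf_mem_list _ (hnd.filter _), hc, List.countP_eq_length_filter]
  have := hev v
  omega

lemma close_trail {S : Set G.E} (hev : ∀ x, G.deg S x % 2 = 0) :
    ∀ (k : ℕ) {u v : G.V} (p : W G u v), p.edges ≠ [] → p.edges.Nodup →
      (∀ f ∈ p.edges, f ∈ S) → S.ncard ≤ p.edges.length + k →
      ∃ (w : G.V) (q : W G w w), q.edges ≠ [] ∧ q.edges.Nodup ∧ ∀ f ∈ q.edges, f ∈ S := by
  intro k
  induction k with
  | zero =>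
    intro u v p hne hnd hsub hlen
    by_cases huv : u = v
    · subst huv; exact ⟨u, p, hne, hnd, hsub⟩
    · obtain ⟨f, hfS, hfp, hfv⟩ := G.exists_fresh_edge hev p hnd hsub huv
      obtain ⟨w, hw⟩ := Sym2.mem_iff_exists.mp hfv
      have : (p.append (W.cons f hw (W.nil w))).edges.length ≤ S.ncard := by
        apply length_le_ncard
        · rw [W.edges_append]
          simp only [W.edges_cons, W.edges_nil]
          exact List.Nodup.append hnd (List.nodup_singleton f)
            (fun a ha hb => by simp at hb; subst hb; exact hfp ha)
        · intro x hx
          rw [W.edges_append] at hx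
          rcases List.mem_append.mp hx with hx | hx
          · exact hsub x hx
          · simp at hx; subst hx; exact hfS
      rw [W.edges_append] at this
      simp only [W.edges_cons, W.edges_nil, List.length_append] at this
      simp only [List.length_cons, List.length_nil] at this
      omega
  | succ k ih =>
    intro u v p hne hnd hsub hlen
    by_cases huv : u = v
    · subst huv; exact ⟨u, p, hne, hnd, hsub⟩
    · obtain ⟨f, hfS, hfp, hfv⟩ := G.exists_fresh_edge hev p hnd hsub huv
      obtain ⟨w, hw⟩ := Sym2.mem_iff_exists.mp hfv
      refine ih (p.append (W.cons f hw (W.nil w))) ?_ ?_ ?_ ?_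
      · rw [W.edges_append]; simp
      · rw [W.edges_append]
        simp only [W.edges_cons, W.edges_nil]
        exact List.Nodup.append hnd (List.nodup_singleton f)
          (fun a ha hb => by simp at hb; subst hb; exact hfp ha)
      · intro x hx
        rw [W.edges_append] at hx
        rcases List.mem_append.mp hx with hx | hx
        · exact hsub x hx
        · simp at hx; subst hx; exact hfS
      · rw [W.edges_append]
        simp only [W.edges_cons, W.edges_nil, List.length_append, List.length_cons,
          List.length_nil]
        omega

lemma exists_closed_trail {S : Set G.E} (hne : S.Nonempty) (hev : ∀ x, G.deg S x % 2 = 0) :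
    ∃ (w : G.V) (q : W G w w), q.edges ≠ [] ∧ q.edges.Nodup ∧ ∀ f ∈ q.edges, f ∈ S := by
  obtain ⟨e0, he0⟩ := hne
  obtain ⟨a, b, hab⟩ : ∃ a b, G.ends e0 = s(a, b) := by
    induction (G.ends e0) using Sym2.ind with
    | _ x y => exact ⟨x, y, rfl⟩
  refine G.close_trail hev S.ncard (W.cons e0 hab (W.nil b)) (by simp) (by simp) ?_ (by simp)
  intro f hf; simp at hf; subst hf; exact he0

/-- Extract a nontrivial closed subwalk at a repeated vertex. -/
lemma exists_closed_of_dup : ∀ {a b : G.V} (p : W G a b), ¬ p.support.Nodup →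
    p.edges.Nodup →
    ∃ (x : G.V) (q : W G x x), q.edges ≠ [] ∧ q.edges.Nodup ∧
      (∀ f ∈ q.edges, f ∈ p.edges) ∧ q.edges.length ≤ p.edges.length := by
  intro a b p
  induction p with
  | nil => intro h _; simp at h
  | @cons a b c e he p ih =>
    intro hnd hend
    simp only [W.edges_cons, List.nodup_cons] at hend
    by_cases hnd' : p.support.Nodup
    · have ha : a ∈ p.support := by
        by_contra hcon
        exact hnd (List.nodup_cons.mpr ⟨hcon, hnd'⟩)
      refine ⟨a, W.cons e he (p.takeUntil a ha), by simp, ?_, ?_, ?_⟩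
      · simp only [W.edges_cons, List.nodup_cons]
        constructor
        · intro hcon
          exact hend.1 (p.edges_takeUntil_subset ha e hcon)
        · have hdecomp := p.edges_take_drop ha
          have : (((p.takeUntil a ha).edges) ++ ((p.dropUntil a ha).edges)).Nodup := by
            rw [← hdecomp]; exact hend.2
          exact this.of_append_left
      · intro f hf
        rcases List.mem_cons.mp hf with rfl | hf
        · simp
        · exact List.mem_cons_of_mem _ (p.edges_takeUntil_subset ha f hf)
      · simp only [W.edges_cons, List.length_cons]
        have := p.length_takeUntil_le ha
        omega
    · obtain ⟨x, q, h1, h2, h3, h4⟩ := ih (by simpa using hnd') hend.2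
      exact ⟨x, q, h1, h2, fun f hf => List.mem_cons_of_mem _ (h3 f hf),
        by simp only [W.edges_cons, List.length_cons]; omega⟩

lemma circ_of_closed_trail : ∀ (n : ℕ) {u : G.V} (p : W G u u), p.edges.length ≤ n →
    p.edges ≠ [] → p.edges.Nodup →
    ∃ (w : G.V) (q : W G w w), q.IsCirc ∧ ∀ f ∈ q.edges, f ∈ p.edges := by
  intro n
  induction n with
  | zero =>
    intro u p hlen hne _
    cases p with
    | nil => exact absurd rfl hne
    | cons e he p => simp at hlen
  | succ n ih =>
    intro u p hlen hne hnd
    by_cases hs : p.support.tail.Nodup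
    · exact ⟨u, p, ⟨hne, hnd, hs⟩, fun f hf => hf⟩
    · cases p with
      | nil => exact absurd rfl hne
      | @cons _ b _ e he p =>
        simp only [W.support_cons, List.tail_cons] at hs
        simp only [W.edges_cons, List.nodup_cons] at hnd
        obtain ⟨x, q, h1, h2, h3, h4⟩ := G.exists_closed_of_dup p hs hnd.2
        obtain ⟨w, r, hr1, hr2⟩ := ih q (by
          simp only [W.edges_cons, List.length_cons] at hlen
          have hq : q.edges.length ≤ p.edges.length := h4
          omega) h1 h2
        exact ⟨w, r, hr1, fun f hf => List.mem_cons_of_mem _ (h3 f (hr2 f hf))⟩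

lemma exists_circ_subset {S : Set G.E} (hne : S.Nonempty) (hev : ∀ x, G.deg S x % 2 = 0) :
    ∃ (w : G.V) (q : W G w w), q.IsCirc ∧ ∀ f ∈ q.edges, f ∈ S := by
  obtain ⟨w, p, h1, h2, h3⟩ := G.exists_closed_trail hne hev
  obtain ⟨w', q, hq1, hq2⟩ := G.circ_of_closed_trail p.edges.length p le_rfl h1 h2
  exact ⟨w', q, hq1, fun f hf => h3 f (hq2 f hf)⟩

/-! ### Set-level degree and sign arithmetic -/

lemma deg_mono {A B : Set G.E} (h : A ⊆ B) (x : G.V) : G.deg A x ≤ G.deg B x :=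
  Set.ncard_le_ncard (fun e he => ⟨h he.1, he.2⟩) (Set.toFinite _)

lemma deg_diff {A B : Set G.E} (h : A ⊆ B) (x : G.V) :
    G.deg (B \ A) x = G.deg B x - G.deg A x := by
  have hset : {e ∈ B \ A | x ∈ G.ends e} = {e ∈ B | x ∈ G.ends e} \ {e ∈ A | x ∈ G.ends e} := by
    ext f
    simp only [Set.mem_setOf_eq, Set.mem_diff]
    tauto
  have hsub' : {e ∈ A | x ∈ G.ends e} ⊆ {e ∈ B | x ∈ G.ends e} := fun f hf => ⟨h hf.1, hf.2⟩
  rw [deg, hset, Set.ncard_diff hsub' (Set.toFinite _)]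
  rfl

lemma deg_union {A B : Set G.E} (h : Disjoint A B) (x : G.V) :
    G.deg (A ∪ B) x = G.deg A x + G.deg B x := by
  have hset : {e ∈ A ∪ B | x ∈ G.ends e} = {e ∈ A | x ∈ G.ends e} ∪ {e ∈ B | x ∈ G.ends e} := by
    ext f
    simp only [Set.mem_setOf_eq, Set.mem_union]
    tauto
  rw [deg, hset, Set.ncard_union_eq (by
    refine Set.disjoint_left.mpr ?_
    intro f hf1 hf2
    exact Set.disjoint_left.mp h hf1.1 hf2.1) (Set.toFinite _) (Set.toFinite _)]
  rfl

lemma signOf_union {A B : Set G.E} (h : Disjoint A B) :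
    G.signOf (A ∪ B) = G.signOf A * G.signOf B :=
  finprod_mem_union h (Set.toFinite _) (Set.toFinite _)

lemma signOf_diff {A B : Set G.E} (h : A ⊆ B) :
    G.signOf B = G.signOf (B \ A) * G.signOf A := by
  rw [← G.signOf_union (Set.disjoint_sdiff_left), Set.diff_union_of_subset h]

@[simp] lemma signOf_empty : G.signOf (∅ : Set G.E) = 1 := finprod_mem_empty

lemma deg_inter_le {A B : Set G.E} (x : G.V) : G.deg (A ∩ B) x ≤ G.deg A x :=
  G.deg_mono Set.inter_subset_left x

lemma deg_symmDiff {A B : Set G.E} (x : G.V) :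
    G.deg ((A \ B) ∪ (B \ A)) x = G.deg A x + G.deg B x - 2 * G.deg (A ∩ B) x := by
  have h1 : G.deg ((A \ B) ∪ (B \ A)) x = G.deg (A \ B) x + G.deg (B \ A) x :=
    G.deg_union disjoint_sdiff_sdiff x
  have h2 : G.deg (A \ B) x = G.deg A x - G.deg (A ∩ B) x := by
    rw [show A \ B = A \ (A ∩ B) by rw [Set.diff_self_inter]]
    exact G.deg_diff Set.inter_subset_left x
  have h3 : G.deg (B \ A) x = G.deg B x - G.deg (A ∩ B) x := by
    rw [show B \ A = B \ (A ∩ B) by rw [Set.inter_comm, Set.diff_self_inter]]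
    exact G.deg_diff Set.inter_subset_right x
  have h4 := G.deg_inter_le (A := A) (B := B) x
  have h5 : G.deg (A ∩ B) x ≤ G.deg B x := G.deg_mono Set.inter_subset_right x
  omega

lemma signOf_symmDiff {A B : Set G.E} :
    G.signOf ((A \ B) ∪ (B \ A)) = G.signOf A * G.signOf B := by
  have h1 : G.signOf ((A \ B) ∪ (B \ A)) = G.signOf (A \ B) * G.signOf (B \ A) :=
    G.signOf_union disjoint_sdiff_sdiff
  have h2 : G.signOf A = G.signOf (A \ (A ∩ B)) * G.signOf (A ∩ B) :=
    G.signOf_diff Set.inter_subset_left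
  have h3 : G.signOf B = G.signOf (B \ (A ∩ B)) * G.signOf (A ∩ B) :=
    G.signOf_diff Set.inter_subset_right
  rw [Set.diff_self_inter] at h2
  rw [show B \ (A ∩ B) = B \ A by rw [Set.inter_comm, Set.diff_self_inter]] at h3
  rw [h1, h2, h3]
  rw [mul_mul_mul_comm, Int.units_mul_self, mul_one]

/-- Main extraction: an even edge set of negative sign contains a negative cycle. -/
lemma exists_neg_cycle_aux : ∀ (n : ℕ) (S : Set G.E), S.ncard ≤ n →
    (∀ x, G.deg S x % 2 = 0) → G.signOf S = -1 →
    ∃ C, G.IsCycle C ∧ C ⊆ S ∧ G.signOf C = -1 := by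
  intro n
  induction n with
  | zero =>
    intro S hcard hev hsgn
    have : S = ∅ := by
      rw [← Set.ncard_eq_zero (Set.toFinite S)]; omega
    rw [this, signOf_empty] at hsgn
    exact absurd hsgn (by decide)
  | succ n ih =>
    intro S hcard hev hsgn
    have hne : S.Nonempty := by
      rcases Set.eq_empty_or_nonempty S with rfl | h
      · rw [signOf_empty] at hsgn; exact absurd hsgn (by decide)
      · exact h
    obtain ⟨w, q, hq, hqs⟩ := G.exists_circ_subset hne hev
    have hsub : q.ES ⊆ S := fun f hf => hqs f hf
    rcases Int.units_eq_one_or (G.signOf q.ES) with h1 | h1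
    · -- remove the cycle and recurse
      have hq' : q.ES.Nonempty := hq.isCycle.1
      have hsplit := G.signOf_diff hsub
      rw [h1, mul_one] at hsplit
      have hev' : ∀ x, G.deg (S \ q.ES) x % 2 = 0 := by
        intro x
        rw [G.deg_diff hsub]
        have h2 := hq.deg x
        have h3 := G.deg_mono hsub x
        have h4 := hev x
        by_cases hx : x ∈ q.support <;> simp [hx] at h2 <;> omega
      have hlt : (S \ q.ES).ncard < S.ncard := by
        rw [Set.ncard_diff hsub (Set.toFinite _)]
        have : 0 < q.ES.ncard := (Set.ncard_pos (Set.toFinite _)).mpr hq'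
        have := Set.ncard_le_ncard hsub (Set.toFinite S)
        omega
      obtain ⟨C, hC1, hC2, hC3⟩ := ih (S \ q.ES) (by omega) hev' (by rw [← hsplit]; exact hsgn)
      exact ⟨C, hC1, fun f hf => (hC2 hf).1, hC3⟩
    · exact ⟨q.ES, hq.isCycle, hsub, h1⟩

lemma exists_neg_cycle {S : Set G.E} (hev : ∀ x, G.deg S x % 2 = 0) (hsgn : G.signOf S = -1) :
    ∃ C, G.IsCycle C ∧ C ⊆ S ∧ G.signOf C = -1 :=
  G.exists_neg_cycle_aux S.ncard S le_rfl hev hsgn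

/-- Forward direction: cycles of both signs through `e` give a negative cycle avoiding `e`. -/
lemma forward_dir {e : G.E} {Cp Cm : Set G.E} (hCp : G.IsCycle Cp) (hep : e ∈ Cp)
    (hsp : G.signOf Cp = 1) (hCm : G.IsCycle Cm) (hem : e ∈ Cm) (hsm : G.signOf Cm = -1) :
    ∃ C, G.IsCycle C ∧ e ∉ C ∧ G.signOf C = -1 := by
  set S := (Cp \ Cm) ∪ (Cm \ Cp) with hS
  have hev : ∀ x, G.deg S x % 2 = 0 := by
    intro x
    rw [hS, G.deg_symmDiff]
    rcases hCp.2.1 x with h1 | h1 <;> rcases hCm.2.1 x with h2 | h2 <;>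
      · have h3 := G.deg_inter_le (A := Cp) (B := Cm) x
        omega
  have hsgn : G.signOf S = -1 := by
    rw [hS, G.signOf_symmDiff, hsp, hsm, one_mul]
  obtain ⟨C, hC1, hC2, hC3⟩ := G.exists_neg_cycle hev hsgn
  refine ⟨C, hC1, fun hcon => ?_, hC3⟩
  rcases hC2 hcon with h | h
  · exact h.2 hem
  · exact h.2 hep

/-! ### Path surgery: bypass, first hits, splitting cycles -/

namespace W

lemma support_dropUntil_subset {u v : G.V} (p : W G u v) {x : G.V} (h : x ∈ p.support) :
    ∀ w ∈ (p.dropUntil x h).support, w ∈ p.support := by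
  intro w hw
  rw [p.support_take_drop h, List.mem_append]
  rw [(p.dropUntil x h).support_eq_cons] at hw
  rcases List.mem_cons.mp hw with rfl | hw
  · exact Or.inl (p.takeUntil _ h).end_mem_support
  · exact Or.inr hw

lemma support_takeUntil_subset {u v : G.V} (p : W G u v) {x : G.V} (h : x ∈ p.support) :
    ∀ w ∈ (p.takeUntil x h).support, w ∈ p.support := by
  intro w hw
  rw [p.support_take_drop h, List.mem_append]
  exact Or.inl hw

lemma takeUntil_support_nodup {u v : G.V} (p : W G u v) {x : G.V} (h : x ∈ p.support)
    (hnd : p.support.Nodup) : (p.takeUntil x h).support.Nodup := by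
  rw [p.support_take_drop h] at hnd
  exact hnd.of_append_left

lemma dropUntil_support_nodup {u v : G.V} (p : W G u v) {x : G.V} (h : x ∈ p.support)
    (hnd : p.support.Nodup) : (p.dropUntil x h).support.Nodup := by
  rw [p.support_take_drop h] at hnd
  rw [(p.dropUntil x h).support_eq_cons, List.nodup_cons]
  refine ⟨?_, hnd.of_append_right⟩
  intro hcon
  exact (List.disjoint_of_nodup_append hnd) (p.takeUntil _ h).end_mem_support hcon

def bypass {u v : G.V} : W G u v → W G u v
  | nil u => nil u
  | cons (u := a) e he p =>
    let q := p.bypass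
    if h : a ∈ q.support then q.dropUntil a h else cons e he q

lemma bypass_support_nodup {u v : G.V} (p : W G u v) : p.bypass.support.Nodup := by
  induction p with
  | nil => simp [bypass]
  | @cons a b c e he p ih =>
    simp only [bypass]
    split_ifs with h
    · exact p.bypass.dropUntil_support_nodup h ih
    · rw [support_cons, List.nodup_cons]
      exact ⟨h, ih⟩

lemma bypass_support_subset {u v : G.V} (p : W G u v) :
    ∀ w ∈ p.bypass.support, w ∈ p.support := by
  induction p with
  | nil => simp [bypass]
  | @cons a b c e he p ih =>
    simp only [bypass]
    split_ifs with h
    · intro w hw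
      have := p.bypass.support_dropUntil_subset h w hw
      exact List.mem_cons_of_mem _ (ih w this)
    · intro w hw
      rcases List.mem_cons.mp hw with rfl | hw
      · simp
      · exact List.mem_cons_of_mem _ (ih w hw)

lemma bypass_edges_subset {u v : G.V} (p : W G u v) :
    ∀ f ∈ p.bypass.edges, f ∈ p.edges := by
  induction p with
  | nil => simp [bypass]
  | @cons a b c e he p ih =>
    simp only [bypass]
    split_ifs with h
    · intro f hf
      have := p.bypass.edges_dropUntil_subset h f hf
      exact List.mem_cons_of_mem _ (ih f this)
    · intro f hf
      rcases List.mem_cons.mp hf with rfl | hf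
      · simp
      · exact List.mem_cons_of_mem _ (ih f hf)

/-- First hit of a target set along a walk. -/
lemma first_hit {u v : G.V} (p : W G u v) (M : Set G.V) (hv : v ∈ M) :
    ∃ (x : G.V) (q : W G u x), x ∈ M ∧ (∀ w ∈ q.support, w ∈ M → w = x) ∧
      (∀ w ∈ q.support, w ∈ p.support) ∧ (∀ f ∈ q.edges, f ∈ p.edges) ∧
      (p.support.Nodup → q.support.Nodup) ∧ (∃ r : W G x v, p = q.append r) := by
  induction p with
  | nil u =>
    exact ⟨u, nil u, hv, by intro w hw _; simpa using hw, fun w hw => hw,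
      fun f hf => hf, fun h => h, ⟨nil u, rfl⟩⟩
  | @cons a b c e he p ih =>
    by_cases ha : a ∈ M
    · refine ⟨a, nil a, ha, by intro w hw _; simpa using hw, ?_, by simp, by simp,
        ⟨cons e he p, rfl⟩⟩
      intro w hw
      rw [show w = a by simpa using hw]
      simp
    · obtain ⟨x, q, h1, h2, h3, h4, h5, r, hr⟩ := ih hv
      refine ⟨x, cons e he q, h1, ?_, ?_, ?_, ?_, ⟨r, by rw [cons_append, ← hr]⟩⟩
      · intro w hw hwM
        rcases List.mem_cons.mp hw with rfl | hw
        · exact absurd hwM ha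
        · exact h2 w hw hwM
      · intro w hw
        rcases List.mem_cons.mp hw with rfl | hw
        · simp
        · exact List.mem_cons_of_mem _ (h3 w hw)
      · intro f hf
        rcases List.mem_cons.mp hf with rfl | hf
        · simp
        · exact List.mem_cons_of_mem _ (h4 f hf)
      · intro hnd
        rw [support_cons, List.nodup_cons] at hnd ⊢
        exact ⟨fun hcon => hnd.1 (h3 a hcon), h5 hnd.2⟩

/-- Split a circuit at a vertex `y` distinct from the base point. -/
lemma split_circ {x : G.V} (p : W G x x) (hc : p.IsCirc) {y : G.V} (hy : y ∈ p.support)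
    (hyx : y ≠ x) :
    ∃ (t : W G x y) (d : W G y x),
      t.support.Nodup ∧ d.support.Nodup ∧
      (∀ w, w ∈ t.support → w ∈ d.support → w = x ∨ w = y) ∧
      t.edges ++ d.edges = p.edges ∧
      (∀ w, w ∈ p.support ↔ w ∈ t.support ∨ w ∈ d.support) := by
  refine ⟨p.takeUntil y hy, p.dropUntil y hy, ?_, ?_, ?_, (p.edges_take_drop hy).symm, ?_⟩
  case _ =>
    set t := p.takeUntil y hy
    set d := p.dropUntil y hy
    have hsupp := p.support_take_drop hy
    have htail : p.support.tail = t.support.tail ++ d.support.tail := by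
      rw [hsupp, t.support_eq_cons]
      simp
      rfl
    have hnd := hc.snodup
    rw [htail] at hnd
    rw [t.support_eq_cons, List.nodup_cons]
    refine ⟨?_, hnd.of_append_left⟩
    intro hcon
    exact (List.disjoint_of_nodup_append hnd) hcon (d.end_mem_support_tail hyx)
  case _ =>
    set t := p.takeUntil y hy
    set d := p.dropUntil y hy
    have hsupp := p.support_take_drop hy
    have htail : p.support.tail = t.support.tail ++ d.support.tail := by
      rw [hsupp, t.support_eq_cons]
      simp
      rfl
    have hnd := hc.snodup
    rw [htail] at hnd
    rw [d.support_eq_cons, List.nodup_cons]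
    refine ⟨?_, hnd.of_append_right⟩
    intro hcon
    exact (List.disjoint_of_nodup_append hnd) (t.end_mem_support_tail (fun h => hyx h.symm)) hcon
  case _ =>
    set t := p.takeUntil y hy
    set d := p.dropUntil y hy
    have hsupp := p.support_take_drop hy
    have htail : p.support.tail = t.support.tail ++ d.support.tail := by
      rw [hsupp, t.support_eq_cons]
      simp
      rfl
    have hnd := hc.snodup
    rw [htail] at hnd
    intro w hwt hwd
    rw [t.support_eq_cons] at hwt
    rw [d.support_eq_cons] at hwd
    rcases List.mem_cons.mp hwt with rfl | hwt
    · exact Or.inl rfl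
    rcases List.mem_cons.mp hwd with rfl | hwd
    · exact Or.inr rfl
    · exact absurd hwd (List.disjoint_of_nodup_append hnd hwt)
  case _ =>
    intro w
    have hsupp := p.support_take_drop hy
    constructor
    · intro hw
      rw [hsupp, List.mem_append] at hw
      rcases hw with hw | hw
      · exact Or.inl hw
      · exact Or.inr (List.mem_of_mem_tail hw)
    · intro hw
      rw [hsupp, List.mem_append]
      rcases hw with hw | hw
      · exact Or.inl hw
      · rw [(p.dropUntil y hy).support_eq_cons] at hw
        rcases List.mem_cons.mp hw with rfl | hw
        · exact Or.inl (p.takeUntil _ hy).end_mem_support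
        · exact Or.inr hw

/-- Rotation of a closed walk. -/
def rot {u : G.V} (p : W G u u) {x : G.V} (h : x ∈ p.support) : W G x x :=
  (p.dropUntil x h).append (p.takeUntil x h)

lemma rot_edges_perm {u : G.V} (p : W G u u) {x : G.V} (h : x ∈ p.support) :
    (p.rot h).edges.Perm p.edges := by
  rw [rot, edges_append, p.edges_take_drop h]
  exact List.perm_append_comm

lemma rot_support_mem {u : G.V} (p : W G u u) {x : G.V} (h : x ∈ p.support) :
    ∀ w, w ∈ (p.rot h).support ↔ w ∈ p.support := by
  intro w
  rw [rot, support_append, p.support_take_drop h, List.mem_append, List.mem_append]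
  constructor
  · rintro (hw | hw)
    · rw [(p.dropUntil x h).support_eq_cons] at hw
      rcases List.mem_cons.mp hw with rfl | hw
      · exact Or.inl (by
          have := (p.takeUntil _ h).end_mem_support
          exact this)
      · exact Or.inr hw
    · exact Or.inl (List.mem_of_mem_tail hw)
  · rintro (hw | hw)
    · rw [(p.takeUntil x h).support_eq_cons] at hw
      rcases List.mem_cons.mp hw with rfl | hw
      · exact Or.inl (p.dropUntil _ h).end_mem_support
      · exact Or.inr hw
    · exact Or.inl (List.mem_of_mem_tail hw)

lemma rot_circ {u : G.V} (p : W G u u) {x : G.V} (h : x ∈ p.support) (hc : p.IsCirc) :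
    (p.rot h).IsCirc := by
  have hperm := p.rot_edges_perm h
  refine ⟨fun hcon => hc.nonnil (List.Perm.eq_nil (hcon ▸ hperm.symm)), hperm.nodup_iff.mpr hc.enodup, ?_⟩
  have htail : (p.rot h).support.tail =
      (p.dropUntil x h).support.tail ++ (p.takeUntil x h).support.tail := by
    rw [rot, support_append, (p.dropUntil x h).support_eq_cons]
    simp
  have htail2 : p.support.tail =
      (p.takeUntil x h).support.tail ++ (p.dropUntil x h).support.tail := by
    rw [p.support_take_drop h, (p.takeUntil x h).support_eq_cons]
    simp
  rw [htail]
  have := hc.snodup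
  rw [htail2] at this
  exact (List.perm_append_comm).nodup_iff.mpr this

end W

lemma tail_append_of_ne_nil {α : Type*} {l m : List α} (h : l ≠ []) :
    (l ++ m).tail = l.tail ++ m := by
  cases l with
  | nil => exact absurd rfl h
  | cons a l => simp

/-- From reachability avoiding `S`, get a simple walk avoiding `S`. -/
lemma walk_of_reach {S : Set G.V} {u v : G.V} (h : G.ReachOutside S u v) (hu : u ∉ S) :
    ∃ p : W G u v, p.support.Nodup ∧ ∀ x ∈ p.support, x ∉ S := by
  rw [ReachOutside] at h
  induction h with
  | refl => exact ⟨W.nil u, by simp, by simpa using hu⟩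
  | @tail w v _ hstep ih =>
    obtain ⟨hw, hv, e, he⟩ := hstep
    obtain ⟨p, hnd, hS⟩ := ih
    refine ⟨(p.append (W.cons e he (W.nil v))).bypass, W.bypass_support_nodup _, ?_⟩
    intro x hx
    have hx2 := W.bypass_support_subset _ x hx
    rw [W.support_append] at hx2
    rcases List.mem_append.mp hx2 with hx2 | hx2
    · exact hS x hx2
    · simp only [W.support_cons, W.support_nil, List.tail_cons, List.mem_singleton] at hx2
      subst hx2
      exact hv

lemma exists_walk (h2 : G.KConnected 2) (u v : G.V) : ∃ _p : W G u v, True := by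
  have hco := h2.2 ∅ (by simp)
  obtain ⟨p, _, _⟩ := G.walk_of_reach (hco u v (by simp) (by simp)) (by simp)
  exact ⟨p, trivial⟩

lemma exists_third_vertex (h2 : G.KConnected 2) (u t : G.V) : ∃ z, z ≠ u ∧ z ≠ t := by
  by_contra hcon
  push_neg at hcon
  have hsub : (Finset.univ : Finset G.V) ⊆ {u, t} := by
    intro z _
    rcases em (z = u) with rfl | h
    · simp
    · simp [hcon z h]
  have := Finset.card_le_card hsub
  have h3 := h2.1
  rw [← Finset.card_univ] at h3
  have h4 : ({u, t} : Finset G.V).card ≤ 2 := by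
    apply le_trans (Finset.card_insert_le _ _)
    simp
  omega

/-- Whitney: in a 2-connected graph, any two distinct vertices lie on a common cycle. -/
lemma whitney_aux (h2 : G.KConnected 2) : ∀ (n : ℕ), ∀ (u t : G.V), u ≠ t →
    (∃ p : W G u t, p.edges.length ≤ n) →
    ∃ p : W G u u, p.IsCirc ∧ t ∈ p.support := by
  intro n
  induction n using Nat.strong_induction_on with
  | _ n ih =>
  rintro u t hut ⟨p, hp⟩
  by_cases hsh : ∃ m, m < n ∧ ∃ q : W G u t, q.edges.length ≤ m
  · obtain ⟨m, hm, hq⟩ := hsh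
    exact ih m hm u t hut hq
  push_neg at hsh
  have hmin : ∀ q : W G u t, n ≤ q.edges.length := by
    intro q
    by_contra hc
    push_neg at hc
    exact absurd (hsh q.edges.length hc q) (lt_irrefl _)
  -- n ≥ 1
  clear hsh
  cases n with
  | zero =>
    cases p with
    | nil => exact absurd rfl hut
    | cons e he p => simp at hp
  | succ n => ?_
  cases n with
  | zero =>
    -- find an edge f with ends u, t
    obtain ⟨f, hf⟩ : ∃ f : G.E, G.ends f = s(u, t) := by
      cases p with
      | nil => exact absurd rfl hut
      | @cons _ b _ e he p =>
        cases p with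
        | nil => exact ⟨e, he⟩
        | cons e' he' p' => simp at hp
    obtain ⟨z, hzu, hzt⟩ := G.exists_third_vertex h2 u t
    have hc1 := h2.2 {u} (by simp)
    have hc2 := h2.2 {t} (by simp)
    obtain ⟨p1, hp1nd, hp1S⟩ := G.walk_of_reach
      (hc1 t z (by simpa using hut.symm) (by simpa using hzu)) (by simpa using hut.symm)
    obtain ⟨p2, hp2nd, hp2S⟩ := G.walk_of_reach
      (hc2 z u (by simpa using hzt) (by simpa using hut)) (by simpa using hzt)
    set Q := (p1.append p2).bypass with hQ
    have hQnd : Q.support.Nodup := W.bypass_support_nodup _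
    have hQsup : ∀ x ∈ Q.support, x ∈ p1.support ∨ x ∈ p2.support := by
      intro x hx
      have := W.bypass_support_subset _ x hx
      rw [W.support_append] at this
      rcases List.mem_append.mp this with h | h
      · exact Or.inl h
      · exact Or.inr (List.mem_of_mem_tail h)
    have hQed : ∀ g ∈ Q.edges, g ∈ p1.edges ∨ g ∈ p2.edges := by
      intro g hg
      have := W.bypass_edges_subset _ g hg
      rw [W.edges_append] at this
      exact List.mem_append.mp this
    have hfQ : f ∉ Q.edges := by
      intro hcon
      rcases hQed f hcon with h | h
      · have : u ∈ p1.support := p1.mem_support_of_mem_ends h (by rw [hf]; simp)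
        exact hp1S u this rfl
      · have : t ∈ p2.support := p2.mem_support_of_mem_ends h (by rw [hf]; simp)
        exact hp2S t this rfl
    refine ⟨W.cons f hf Q, ⟨by simp, ?_, by simpa using hQnd⟩, by simp⟩
    rw [W.edges_cons, List.nodup_cons]
    exact ⟨hfQ, Q.edges_nodup_of_support_nodup hQnd⟩
  | succ n =>
    -- decompose from the t-side
    obtain ⟨w, f, hf, q, hqlen⟩ : ∃ (w : G.V) (f : G.E), G.ends f = s(t, w) ∧
        ∃ q : W G u w, q.edges.length ≤ n + 1 := by
      cases hpr : p.reverse with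
      | nil =>
        exfalso
        have := congrArg W.edges hpr
        rw [W.edges_reverse] at this
        simp only [W.edges_nil] at this
        have := congrArg List.length this
        simp at this
        cases p with
        | nil => exact hut rfl
        | cons e he p' => simp at this
      | @cons _ b _ f hfe pr' =>
        refine ⟨b, f, hfe, pr'.reverse, ?_⟩
        have h1 := congrArg W.edges hpr
        rw [W.edges_reverse] at h1
        have h2 := congrArg List.length h1
        simp only [W.edges_cons, List.length_reverse, List.length_cons] at h2
        rw [W.edges_reverse, List.length_reverse]
        omega
    have htw : t ≠ w := G.ne_of_ends hf
    have huw : u ≠ w := by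
      rintro rfl
      have : (W.cons f (by rw [hf, Sym2.eq_swap]) (W.nil t) : W G u t).edges.length = 1 := by simp
      have := hmin (W.cons f (by rw [hf, Sym2.eq_swap]) (W.nil t))
      omega
    obtain ⟨D, hD, hwD⟩ := ih (n+1) (by omega) u w huw ⟨q, hqlen⟩
    by_cases htD : t ∈ D.support
    · exact ⟨D, hD, htD⟩
    -- augment with a path from t avoiding w
    have hc := h2.2 {w} (by simp)
    obtain ⟨R, hRnd, hRS⟩ := G.walk_of_reach
      (hc t u (by simpa using htw) (by simpa using huw)) (by simpa using htw)
    obtain ⟨z, R₁, hzD, hR₁M, hR₁sup, _, hR₁nd', _⟩ :=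
      R.first_hit {y | y ∈ D.support} (by simpa using D.start_mem_support)
    have hR₁nd : R₁.support.Nodup := hR₁nd' hRnd
    have hzR : z ∈ R.support := hR₁sup z R₁.end_mem_support
    have hzw : z ≠ w := by
      intro hcon
      exact hRS z hzR (Set.mem_singleton_iff.mpr hcon)
    have hzDs : z ∈ D.support := hzD
    -- rotate D to z and split at w
    set D' := D.rot hzDs with hD'
    have hD'c : D'.IsCirc := D.rot_circ hzDs hD
    have hwD' : w ∈ D'.support := (D.rot_support_mem hzDs w).mpr hwD
    have hwz : w ≠ z := fun h => hzw h.symm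
    obtain ⟨t', d', ht'nd, hd'nd, hint, hedges, hsupiff⟩ := D'.split_circ hD'c hwD' hwz
    have huD' : u ∈ D'.support := (D.rot_support_mem hzDs u).mpr D.start_mem_support
    -- choose the arc containing u
    have harc : ∃ A : W G z w, A.support.Nodup ∧ u ∈ A.support ∧
        (∀ x ∈ A.support, x ∈ D.support) ∧ (∀ g ∈ A.edges, g ∈ D'.edges) := by
      rcases (hsupiff u).mp huD' with h | h
      · refine ⟨t', ht'nd, h, ?_, ?_⟩
        · intro x hx
          have : x ∈ D'.support := (hsupiff x).mpr (Or.inl hx)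
          exact (D.rot_support_mem hzDs x).mp this
        · intro g hg
          rw [← hedges]
          exact List.mem_append_left _ hg
      · refine ⟨d'.reverse, by rw [W.support_reverse]; exact List.nodup_reverse.mpr hd'nd, ?_, ?_, ?_⟩
        · rw [W.support_reverse]; exact List.mem_reverse.mpr h
        · intro x hx
          rw [W.support_reverse, List.mem_reverse] at hx
          have : x ∈ D'.support := (hsupiff x).mpr (Or.inr hx)
          exact (D.rot_support_mem hzDs x).mp this
        · intro g hg
          rw [W.edges_reverse, List.mem_reverse] at hg
          rw [← hedges]
          exact List.mem_append_right _ hg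
    obtain ⟨A, hAnd, huA, hAD, hAed⟩ := harc
    -- assemble the cycle Z : W t t
    set X := (W.cons f (by rw [hf, Sym2.eq_swap] : G.ends f = s(w, t)) (W.nil t) : W G w t)
    set Z := R₁.append (A.append X) with hZdef
    have hAne : A.support ≠ [] := A.support_ne_nil
    have hZsup : Z.support = R₁.support ++ (A.support.tail ++ [t]) := by
      rw [hZdef, W.support_append, W.support_append]
      congr 1
      have : X.support = [w, t] := rfl
      rw [this]
      simp only [List.tail_cons]
      rw [tail_append_of_ne_nil hAne]
    have hDR₁ : ∀ x, x ∈ R₁.support → x ∈ D.support → x = z := by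
      intro x hx hxD
      exact hR₁M x hx hxD
    have hZedges : Z.edges = R₁.edges ++ (A.edges ++ [f]) := by
      rw [hZdef, W.edges_append, W.edges_append]
      rfl
    have hedis : ∀ g ∈ R₁.edges, g ∉ A.edges := by
      intro g hg1 hg2
      obtain ⟨a, b, hab, hne⟩ := G.ends_rep g
      have ha1 : a ∈ R₁.support := R₁.mem_support_of_mem_ends hg1 (by rw [hab]; simp)
      have hb1 : b ∈ R₁.support := R₁.mem_support_of_mem_ends hg1 (by rw [hab]; simp)
      have ha2 := hDR₁ a ha1 (hAD a (A.mem_support_of_mem_ends hg2 (by rw [hab]; simp)))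
      have hb2 := hDR₁ b hb1 (hAD b (A.mem_support_of_mem_ends hg2 (by rw [hab]; simp)))
      exact hne (ha2.trans hb2.symm)
    have hfR₁ : f ∉ R₁.edges := by
      intro hcon
      have hwmem : w ∈ R₁.support := R₁.mem_support_of_mem_ends hcon (by rw [hf]; simp)
      exact hRS w (hR₁sup w hwmem) rfl
    have hfA : f ∉ A.edges := by
      intro hcon
      have : t ∈ A.support := A.mem_support_of_mem_ends hcon (by rw [hf]; simp)
      exact htD (hAD t this)
    have hR₁ednd : R₁.edges.Nodup := R₁.edges_nodup_of_support_nodup hR₁nd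
    have hAednd : A.edges.Nodup := A.edges_nodup_of_support_nodup hAnd
    have hAnd' : z ∉ A.support.tail ∧ A.support.tail.Nodup := by
      have h := hAnd
      rw [A.support_eq_cons] at h
      exact List.nodup_cons.mp h
    have hR₁nd' : t ∉ R₁.support.tail ∧ R₁.support.tail.Nodup := by
      have h := hR₁nd
      rw [R₁.support_eq_cons] at h
      exact List.nodup_cons.mp h
    have htnA : t ∉ A.support.tail := fun hcon => htD (hAD t (List.mem_of_mem_tail hcon))
    have hZcirc : Z.IsCirc ∧ u ∈ Z.support ∧ t ∈ Z.support := by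
      refine ⟨⟨?_, ?_, ?_⟩, ?_, ?_⟩
      · rw [hZedges]; simp
      · rw [hZedges]
        refine List.Nodup.append hR₁ednd
          (List.Nodup.append hAednd (List.nodup_singleton f) ?_) ?_
        · intro a ha hb
          simp only [List.mem_singleton] at hb
          subst hb
          exact hfA ha
        · intro g hg hg2
          rcases List.mem_append.mp hg2 with h | h
          · exact hedis g hg h
          · simp only [List.mem_singleton] at h
            subst h
            exact hfR₁ hg
      · have h1 : Z.support.tail = R₁.support.tail ++ (A.support.tail ++ [t]) := by
          rw [hZsup, tail_append_of_ne_nil R₁.support_ne_nil]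
        rw [h1]
        refine List.Nodup.append hR₁nd'.2
          (List.Nodup.append hAnd'.2 (List.nodup_singleton t) ?_) ?_
        · intro x hx hx2
          simp only [List.mem_singleton] at hx2
          subst hx2
          exact htnA hx
        · intro x hx hx2
          rcases List.mem_append.mp hx2 with h | h
          · have hxz := hDR₁ x (List.mem_of_mem_tail hx) (hAD x (List.mem_of_mem_tail h))
            subst hxz
            exact hAnd'.1 h
          · simp only [List.mem_singleton] at h
            subst h
            exact hR₁nd'.1 hx
      · rw [hZsup]
        have huA' : u ∈ z :: A.support.tail := by rw [← A.support_eq_cons]; exact huA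
        rcases List.mem_cons.mp huA' with rfl | h
        · exact List.mem_append_left _ R₁.end_mem_support
        · exact List.mem_append_right _ (List.mem_append_left _ h)
      · rw [hZsup]
        exact List.mem_append_left _ R₁.start_mem_support
    obtain ⟨hZc, huZ, htZ⟩ := hZcirc
    exact ⟨Z.rot huZ, Z.rot_circ huZ hZc, (Z.rot_support_mem huZ t).mpr htZ⟩

lemma whitney (h2 : G.KConnected 2) {u t : G.V} (hut : u ≠ t) :
    ∃ p : W G u u, p.IsCirc ∧ t ∈ p.support := by
  obtain ⟨q, -⟩ := G.exists_walk h2 u t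
  exact G.whitney_aux h2 q.edges.length u t hut ⟨q, le_rfl⟩

namespace W

lemma prefix_full {u t1 : G.V} (F1 : W G u t1) (r : W G t1 t1)
    (hnd : (F1.append r).support.Nodup) : r.support.tail = [] := by
  cases r with
  | nil => rfl
  | cons e he r' =>
    exfalso
    have h1 : t1 ∈ (cons e he r').support.tail := by
      simp only [support_cons, List.tail_cons]
      exact r'.end_mem_support
    have h2 : t1 ∈ F1.support := F1.end_mem_support
    rw [support_append] at hnd
    exact (List.disjoint_of_nodup_append hnd) h2 h1

end W

/-- Auxiliary step for the fan lemma: reroute through a path `S` leaving the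
union of the two arcs at `z`. -/
lemma fan_out {T : Set G.V} {u t1 z x' : G.V} (a1 a2 : W G u t1) (S : W G z x')
    (ha1nd : a1.support.Nodup) (ha2nd : a2.support.Nodup) (hSnd : S.support.Nodup)
    (hint : ∀ w, w ∈ a1.support → w ∈ a2.support → w = u ∨ w = t1)
    (ha1T : ∀ w ∈ a1.support, w ∈ T → w = t1)
    (ha2T : ∀ w ∈ a2.support, w ∈ T → w = t1)
    (hST : ∀ w ∈ S.support, w ∈ T → w = x')
    (hSD : ∀ w ∈ S.support, (w ∈ a1.support ∨ w ∈ a2.support) → w = z)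
    (ht1T : t1 ∈ T) (hx'T : x' ∈ T) (hx'1 : x' ≠ t1)
    (hz1 : z ∈ a1.support) (hzt1 : z ≠ t1) :
    ∃ (x y : G.V) (F1 : W G u x) (F2 : W G u y), x ∈ T ∧ y ∈ T ∧ x ≠ y ∧
      F1.support.Nodup ∧ F2.support.Nodup ∧
      (∀ w ∈ F1.support, w ∈ T → w = x) ∧ (∀ w ∈ F2.support, w ∈ T → w = y) ∧
      (∀ w, w ∈ F1.support → w ∈ F2.support → w = u) := by
  set b := a1.takeUntil z hz1 with hb
  have hbnd : b.support.Nodup := a1.takeUntil_support_nodup hz1 ha1nd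
  have hbsub : ∀ w ∈ b.support, w ∈ a1.support := a1.support_takeUntil_subset hz1
  have ht1b : t1 ∉ b.support := by
    intro hcon
    have hdec := a1.support_take_drop hz1
    have ht1drop : t1 ∈ (a1.dropUntil z hz1).support.tail :=
      (a1.dropUntil z hz1).end_mem_support_tail hzt1
    rw [hdec] at ha1nd
    exact (List.disjoint_of_nodup_append ha1nd) hcon ht1drop
  have hznS : z ∉ S.support.tail := by
    have h := hSnd
    rw [S.support_eq_cons] at h
    exact (List.nodup_cons.mp h).1
  set F1 := b.append S with hF1
  have hF1sup : F1.support = b.support ++ S.support.tail := by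
    rw [hF1, W.support_append]
  have hF1nd : F1.support.Nodup := by
    rw [hF1sup]
    refine List.Nodup.append hbnd ((List.nodup_cons.mp (by
      rw [← S.support_eq_cons]; exact hSnd)).2) ?_
    intro w hw hw2
    have := hSD w (List.mem_of_mem_tail hw2) (Or.inl (hbsub w hw))
    subst this
    exact hznS hw2
  refine ⟨x', t1, F1, a2, hx'T, ht1T, hx'1, hF1nd, ha2nd, ?_, ha2T, ?_⟩
  · intro w hw hwT
    rw [hF1sup] at hw
    rcases List.mem_append.mp hw with h | h
    · have hwt1 := ha1T w (hbsub w h) hwT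
      subst hwt1
      exact absurd h ht1b
    · exact hST w (List.mem_of_mem_tail h) hwT
  · intro w hw hw2
    rw [hF1sup] at hw
    rcases List.mem_append.mp hw with h | h
    · rcases hint w (hbsub w h) hw2 with h' | h'
      · exact h'
      · exact absurd (h' ▸ h) ht1b
    · have := hSD w (List.mem_of_mem_tail h) (Or.inr hw2)
      subst this
      exact absurd h hznS

lemma fan (h2 : G.KConnected 2) (T : Set G.V) {t1 t2 : G.V} (ht1 : t1 ∈ T) (ht2 : t2 ∈ T)
    (hne12 : t1 ≠ t2) {u : G.V} (hu : u ∉ T) :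
    ∃ (x y : G.V) (F1 : W G u x) (F2 : W G u y), x ∈ T ∧ y ∈ T ∧ x ≠ y ∧
      F1.support.Nodup ∧ F2.support.Nodup ∧
      (∀ w ∈ F1.support, w ∈ T → w = x) ∧ (∀ w ∈ F2.support, w ∈ T → w = y) ∧
      (∀ w, w ∈ F1.support → w ∈ F2.support → w = u) := by
  have hut1 : u ≠ t1 := fun h => hu (h ▸ ht1)
  obtain ⟨D, hD, ht1D⟩ := G.whitney h2 hut1
  obtain ⟨a1, d, ha1nd, hdnd, hint0, hedges, hsupiff⟩ := D.split_circ hD ht1D (Ne.symm hut1)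
  set a2 := d.reverse with ha2def
  have ha2nd : a2.support.Nodup := by
    rw [ha2def, W.support_reverse]
    exact List.nodup_reverse.mpr hdnd
  have ha2mem : ∀ w, w ∈ a2.support ↔ w ∈ d.support := by
    intro w
    rw [ha2def, W.support_reverse, List.mem_reverse]
  have hint : ∀ w, w ∈ a1.support → w ∈ a2.support → w = u ∨ w = t1 := by
    intro w h1 h2
    exact hint0 w h1 ((ha2mem w).mp h2)
  obtain ⟨x, F1, hxT, hF1T, hF1sub, -, hF1nd', ⟨r1, hr1⟩⟩ := a1.first_hit T ht1
  obtain ⟨y, F2, hyT, hF2T, hF2sub, -, hF2nd', ⟨r2, hr2⟩⟩ := a2.first_hit T ht1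
  have hF1nd : F1.support.Nodup := hF1nd' ha1nd
  have hF2nd : F2.support.Nodup := hF2nd' ha2nd
  by_cases hxy : x = y
  · -- both arcs meet T only at t1; augment
    have hxt1 : x = t1 := by
      rcases hint x (hF1sub x F1.end_mem_support) (hxy ▸ hF2sub y F2.end_mem_support) with h | h
      · exact absurd (h ▸ hxT) hu
      · exact h
    have hyt1 : y = t1 := hxy ▸ hxt1
    have ha1T : ∀ w ∈ a1.support, w ∈ T → w = t1 := by
      subst hxt1
      intro w hw hwT
      rw [hr1, W.support_append, W.prefix_full F1 r1 (by rw [← hr1]; exact ha1nd),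
        List.append_nil] at hw
      exact hF1T w hw hwT
    have ha2T : ∀ w ∈ a2.support, w ∈ T → w = t1 := by
      subst hyt1
      intro w hw hwT
      rw [hr2, W.support_append, W.prefix_full F2 r2 (by rw [← hr2]; exact ha2nd),
        List.append_nil] at hw
      exact hF2T w hw hwT
    -- path from u to t2 avoiding t1
    have hc := h2.2 {t1} (by simp)
    obtain ⟨R, hRnd, hRS⟩ := G.walk_of_reach
      (hc u t2 (by simpa using hut1) (by simpa using Ne.symm hne12)) (by simpa using hut1)
    obtain ⟨x', R₁, hx'T, hR₁T, hR₁sub, -, hR₁nd', -⟩ := R.first_hit T ht2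
    have hR₁nd : R₁.support.Nodup := hR₁nd' hRnd
    have hx'1 : x' ≠ t1 := by
      intro hcon
      exact hRS x' (hR₁sub x' R₁.end_mem_support) (by simp [hcon])
    obtain ⟨z, q₀, hzM, hq₀M, hq₀sub, -, hq₀nd', -⟩ := R₁.reverse.first_hit
      {w | w ∈ a1.support ∨ w ∈ a2.support}
      (by exact Or.inl a1.start_mem_support)
    set S := q₀.reverse with hSdef
    have hSnd : S.support.Nodup := by
      rw [hSdef, W.support_reverse]
      exact List.nodup_reverse.mpr (hq₀nd' (by
        rw [W.support_reverse]
        exact List.nodup_reverse.mpr hR₁nd))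
    have hSmem : ∀ w, w ∈ S.support ↔ w ∈ q₀.support := fun w => by
      rw [hSdef, W.support_reverse, List.mem_reverse]
    have hSR₁ : ∀ w ∈ S.support, w ∈ R₁.support := by
      intro w hw
      have h := hq₀sub w ((hSmem w).mp hw)
      rw [W.support_reverse, List.mem_reverse] at h
      exact h
    have hST : ∀ w ∈ S.support, w ∈ T → w = x' := fun w hw hwT => hR₁T w (hSR₁ w hw) hwT
    have hSD : ∀ w ∈ S.support, (w ∈ a1.support ∨ w ∈ a2.support) → w = z := by
      intro w hw h
      exact hq₀M w ((hSmem w).mp hw) h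
    have hzR₁ : z ∈ R₁.support := hSR₁ z (by rw [hSdef]; exact q₀.reverse.start_mem_support)
    have hzt1 : z ≠ t1 := by
      intro hcon
      exact hRS z (hR₁sub z hzR₁) (by simp [hcon])
    rcases hzM with hz1 | hz1
    · exact G.fan_out a1 a2 S ha1nd ha2nd hSnd hint ha1T ha2T hST hSD ht1 hx'T hx'1 hz1 hzt1
    · exact G.fan_out a2 a1 S ha2nd ha1nd hSnd (fun w h1 h2 => hint w h2 h1) ha2T ha1T hST
        (fun w hw h => hSD w hw h.symm) ht1 hx'T hx'1 hz1 hzt1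
  · refine ⟨x, y, F1, F2, hxT, hyT, hxy, hF1nd, hF2nd, hF1T, hF2T, ?_⟩
    intro w hw1 hw2
    rcases hint w (hF1sub w hw1) (hF2sub w hw2) with h | h
    · exact h
    · subst h
      have h1 := hF1T w hw1 ht1
      have h2 := hF2T w hw2 ht1
      exact absurd (h1.symm.trans h2) hxy

/-- Helper: drop the beginning of `F2` when `v` lies on it. -/
lemma ts_drop {T : Set G.V} {u v x y : G.V} (F1 : W G u x) (F2 : W G u y)
    (hF1nd : F1.support.Nodup) (hF2nd : F2.support.Nodup)
    (hxT : x ∈ T) (hyT : y ∈ T) (hxy : x ≠ y)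
    (hF1T : ∀ w ∈ F1.support, w ∈ T → w = x) (hF2T : ∀ w ∈ F2.support, w ∈ T → w = y)
    (hint : ∀ w, w ∈ F1.support → w ∈ F2.support → w = u)
    (huv : u ≠ v) (hv : v ∈ F2.support) :
    ∃ (x' y' : G.V) (P1 : W G u x') (P2 : W G v y'), x' ∈ T ∧ y' ∈ T ∧ x' ≠ y' ∧
      P1.support.Nodup ∧ P2.support.Nodup ∧
      (∀ w ∈ P1.support, w ∈ T → w = x') ∧ (∀ w ∈ P2.support, w ∈ T → w = y') ∧
      (∀ w, w ∈ P1.support → w ∉ P2.support) := by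
  set P2 := F2.dropUntil v hv with hP2
  have hP2nd : P2.support.Nodup := F2.dropUntil_support_nodup hv hF2nd
  have hP2sub : ∀ w ∈ P2.support, w ∈ F2.support := F2.support_dropUntil_subset hv
  have huP2 : u ∉ P2.support := by
    intro hcon
    rw [P2.support_eq_cons] at hcon
    rcases List.mem_cons.mp hcon with h | h
    · exact huv h
    · have hdec := F2.support_take_drop hv
      rw [hdec] at hF2nd
      exact (List.disjoint_of_nodup_append hF2nd) (F2.takeUntil v hv).start_mem_support h
  refine ⟨x, y, F1, P2, hxT, hyT, hxy, hF1nd, hP2nd, hF1T,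
    fun w hw hwT => hF2T w (hP2sub w hw) hwT, ?_⟩
  intro w hw1 hw2
  have := hint w hw1 (hP2sub w hw2)
  subst this
  exact huP2 hw2

/-- Helper: reroute `Q₁` into `F1`. -/
lemma ts_reroute {T : Set G.V} {u v x y z : G.V} (F1 : W G u x) (F2 : W G u y)
    (Q₁ : W G v z)
    (hF1nd : F1.support.Nodup) (hF2nd : F2.support.Nodup) (hQnd : Q₁.support.Nodup)
    (hxT : x ∈ T) (hyT : y ∈ T) (hxy : x ≠ y)
    (hF1T : ∀ w ∈ F1.support, w ∈ T → w = x) (hF2T : ∀ w ∈ F2.support, w ∈ T → w = y)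
    (hint : ∀ w, w ∈ F1.support → w ∈ F2.support → w = u)
    (hQT : ∀ w ∈ Q₁.support, w ∈ T → w = z)
    (hQF1 : ∀ w ∈ Q₁.support, w ∈ F1.support → w = z)
    (hQF2 : ∀ w ∈ Q₁.support, w ∈ F2.support → w = z)
    (huQ : u ∉ Q₁.support) (hzF1 : z ∈ F1.support) :
    ∃ (x' y' : G.V) (P1 : W G u x') (P2 : W G v y'), x' ∈ T ∧ y' ∈ T ∧ x' ≠ y' ∧
      P1.support.Nodup ∧ P2.support.Nodup ∧
      (∀ w ∈ P1.support, w ∈ T → w = x') ∧ (∀ w ∈ P2.support, w ∈ T → w = y') ∧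
      (∀ w, w ∈ P1.support → w ∉ P2.support) := by
  set b := F1.dropUntil z hzF1 with hbdef
  have hbnd : b.support.Nodup := F1.dropUntil_support_nodup hzF1 hF1nd
  have hbsub : ∀ w ∈ b.support, w ∈ F1.support := F1.support_dropUntil_subset hzF1
  have hznb : z ∉ b.support.tail := by
    have h := hbnd
    rw [b.support_eq_cons] at h
    exact (List.nodup_cons.mp h).1
  have hub : u ∉ b.support.tail := by
    intro hcon
    have hdec := F1.support_take_drop hzF1
    rw [hdec] at hF1nd
    exact (List.disjoint_of_nodup_append hF1nd) (F1.takeUntil z hzF1).start_mem_support hcon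
  set P2 := Q₁.append b with hP2def
  have hP2sup : P2.support = Q₁.support ++ b.support.tail := by
    rw [hP2def, W.support_append]
  have hP2nd : P2.support.Nodup := by
    rw [hP2sup]
    refine List.Nodup.append hQnd (by
      have h := hbnd
      rw [b.support_eq_cons] at h
      exact (List.nodup_cons.mp h).2) ?_
    intro w hw hw2
    have := hQF1 w hw (hbsub w (List.mem_of_mem_tail hw2))
    subst this
    exact hznb hw2
  refine ⟨y, x, F2, P2, hyT, hxT, Ne.symm hxy, hF2nd, hP2nd, hF2T, ?_, ?_⟩
  · intro w hw hwT
    rw [hP2sup] at hw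
    rcases List.mem_append.mp hw with h | h
    · have hwz := hQT w h hwT
      subst hwz
      exact hF1T w hzF1 hwT
    · exact hF1T w (hbsub w (List.mem_of_mem_tail h)) hwT
  · intro w hw1 hw2
    rw [hP2sup] at hw2
    rcases List.mem_append.mp hw2 with h | h
    · have hwz := hQF2 w h hw1
      subst hwz
      have := hQF1 w h hzF1
      have hzu : w = u := hint w (this ▸ hzF1) hw1
      exact huQ (hzu ▸ h)
    · have hwu := hint w (hbsub w (List.mem_of_mem_tail h)) hw1
      subst hwu
      exact hub h

/-- Two disjoint paths from the ends of an edge to a target set. -/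
lemma two_source (h2 : G.KConnected 2) (T : Set G.V) {t1 t2 : G.V} (ht1 : t1 ∈ T)
    (ht2 : t2 ∈ T) (hne12 : t1 ≠ t2) {u v : G.V} (huv : u ≠ v) :
    ∃ (x y : G.V) (P1 : W G u x) (P2 : W G v y), x ∈ T ∧ y ∈ T ∧ x ≠ y ∧
      P1.support.Nodup ∧ P2.support.Nodup ∧
      (∀ w ∈ P1.support, w ∈ T → w = x) ∧ (∀ w ∈ P2.support, w ∈ T → w = y) ∧
      (∀ w, w ∈ P1.support → w ∉ P2.support) := by
  -- a target distinct from any given vertex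
  have htgt : ∀ w : G.V, ∃ t ∈ T, t ≠ w := by
    intro w
    rcases em (t1 = w) with rfl | h
    · exact ⟨t2, ht2, Ne.symm hne12⟩
    · exact ⟨t1, ht1, h⟩
  by_cases huT : u ∈ T <;> by_cases hvT : v ∈ T
  · refine ⟨u, v, W.nil u, W.nil v, huT, hvT, huv, by simp, by simp, ?_, ?_, ?_⟩
    · intro w hw _; simpa using hw
    · intro w hw _; simpa using hw
    · intro w hw
      rw [show w = u by simpa using hw]
      simp [huv]
  · -- u ∈ T, v ∉ T
    obtain ⟨t, htT, htu⟩ := htgt u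
    have hc := h2.2 {u} (by simp)
    obtain ⟨R, hRnd, hRS⟩ := G.walk_of_reach
      (hc v t (by simpa using Ne.symm huv) (by simpa using htu)) (by simpa using Ne.symm huv)
    obtain ⟨y, P2, hyT, hP2T, hP2sub, -, hP2nd', -⟩ := R.first_hit T htT
    have hP2nd : P2.support.Nodup := hP2nd' hRnd
    have huy : u ≠ y := by
      intro hcon
      exact hRS y (hP2sub y P2.end_mem_support) (by simp [hcon])
    refine ⟨u, y, W.nil u, P2, huT, hyT, huy, by simp, hP2nd, ?_, hP2T, ?_⟩
    · intro w hw _; simpa using hw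
    · intro w hw
      rw [show w = u by simpa using hw]
      intro hcon
      exact hRS u (hP2sub u hcon) rfl
  · -- v ∈ T, u ∉ T : symmetric to previous
    obtain ⟨t, htT, htv⟩ := htgt v
    have hc := h2.2 {v} (by simp)
    obtain ⟨R, hRnd, hRS⟩ := G.walk_of_reach
      (hc u t (by simpa using huv) (by simpa using htv)) (by simpa using huv)
    obtain ⟨x, P1, hxT, hP1T, hP1sub, -, hP1nd', -⟩ := R.first_hit T htT
    have hP1nd : P1.support.Nodup := hP1nd' hRnd
    have hvx : v ≠ x := by
      intro hcon
      exact hRS x (hP1sub x P1.end_mem_support) (by simp [hcon])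
    refine ⟨x, v, P1, W.nil v, hxT, hvT, Ne.symm hvx, hP1nd, by simp, hP1T, ?_, ?_⟩
    · intro w hw _; simpa using hw
    · intro w hw hcon
      rw [show w = v by simpa using hcon] at hw
      exact hRS v (hP1sub v hw) rfl
  · -- u, v ∉ T : use the fan at u
    obtain ⟨x, y, F1, F2, hxT, hyT, hxy, hF1nd, hF2nd, hF1T, hF2T, hint⟩ :=
      G.fan h2 T ht1 ht2 hne12 huT
    by_cases hv1 : v ∈ F1.support
    · obtain ⟨x', y', P1, P2, h⟩ := G.ts_drop F2 F1 hF2nd hF1nd hyT hxT (Ne.symm hxy)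
        hF2T hF1T (fun w h1 h2 => hint w h2 h1) huv hv1
      exact ⟨x', y', P1, P2, h⟩
    by_cases hv2 : v ∈ F2.support
    · exact G.ts_drop F1 F2 hF1nd hF2nd hxT hyT hxy hF1T hF2T hint huv hv2
    -- v not on the fan: connect v to the fan or to T
    have hc := h2.2 {u} (by simp)
    have ht1u : t1 ≠ u := fun h => huT (h ▸ ht1)
    obtain ⟨Q, hQnd, hQS⟩ := G.walk_of_reach
      (hc v t1 (by simpa using Ne.symm huv) (by simpa using ht1u)) (by simpa using Ne.symm huv)
    obtain ⟨z, Q₁, hzM, hQM, hQsub, -, hQnd', -⟩ := Q.first_hit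
      {w | w ∈ T ∨ w ∈ F1.support ∨ w ∈ F2.support} (by exact Or.inl ht1)
    have hQ₁nd : Q₁.support.Nodup := hQnd' hQnd
    have huQ : u ∉ Q₁.support := fun hcon => hQS u (hQsub u hcon) rfl
    have hQT : ∀ w ∈ Q₁.support, w ∈ T → w = z := fun w hw hwT => hQM w hw (Or.inl hwT)
    have hQF1 : ∀ w ∈ Q₁.support, w ∈ F1.support → w = z :=
      fun w hw hwF => hQM w hw (Or.inr (Or.inl hwF))
    have hQF2 : ∀ w ∈ Q₁.support, w ∈ F2.support → w = z :=
      fun w hw hwF => hQM w hw (Or.inr (Or.inr hwF))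
    rcases hzM with hzT | hzF1 | hzF2
    · by_cases hzF1 : z ∈ F1.support
      · exact G.ts_reroute F1 F2 Q₁ hF1nd hF2nd hQ₁nd hxT hyT hxy hF1T hF2T hint
          hQT hQF1 hQF2 huQ hzF1
      by_cases hzF2 : z ∈ F2.support
      · exact G.ts_reroute F2 F1 Q₁ hF2nd hF1nd hQ₁nd hyT hxT (Ne.symm hxy) hF2T hF1T
          (fun w h1 h2 => hint w h2 h1) hQT hQF2 hQF1 huQ hzF2
      · refine ⟨x, z, F1, Q₁, hxT, hzT, fun h => hzF1 (h ▸ F1.end_mem_support), hF1nd, hQ₁nd,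
          hF1T, hQT, ?_⟩
        intro w hw1 hw2
        have := hQF1 w hw2 hw1
        subst this
        exact hzF1 hw1
    · exact G.ts_reroute F1 F2 Q₁ hF1nd hF2nd hQ₁nd hxT hyT hxy hF1T hF2T hint
        hQT hQF1 hQF2 huQ hzF1
    · exact G.ts_reroute F2 F1 Q₁ hF2nd hF1nd hQ₁nd hyT hxT (Ne.symm hxy) hF2T hF1T
        (fun w h1 h2 => hint w h2 h1) hQT hQF2 hQF1 huQ hzF2

/-- A cycle edge set is exactly the edge set of some circuit walk. -/
lemma rep_of_isCycle {S : Set G.E} (hS : G.IsCycle S) :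
    ∃ (w : G.V) (p : W G w w), p.IsCirc ∧ (∀ f, f ∈ p.edges ↔ f ∈ S) := by
  have hev : ∀ x, G.deg S x % 2 = 0 := by
    intro x
    rcases hS.2.1 x with h | h <;> omega
  obtain ⟨w, p, hp, hsub⟩ := G.exists_circ_subset hS.1 hev
  refine ⟨w, p, hp, fun f => ⟨fun h => hsub f h, fun hfS => ?_⟩⟩
  by_contra hfp
  obtain ⟨e0, he0⟩ := List.exists_mem_of_ne_nil _ hp.nonnil
  have hconn := hS.2.2 e0 (hsub e0 he0) f hfS
  have key : ∀ g, Relation.ReflTransGen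
      (fun a b => a ∈ S ∧ b ∈ S ∧ ∃ x, x ∈ G.ends a ∧ x ∈ G.ends b) e0 g → g ∈ p.edges := by
    intro g hg
    induction hg with
    | refl => exact he0
    | @tail a b _ hrel ih =>
      obtain ⟨haS, hbS, x, hxa, hxb⟩ := hrel
      by_contra hbp
      have hx2 : G.deg p.ES x = 2 := by
        rw [hp.deg x, if_pos (p.mem_support_of_mem_ends ih hxa)]
      have hins : insert b {g ∈ p.ES | x ∈ G.ends g} ⊆ {g ∈ S | x ∈ G.ends g} := by
        intro g hg
        rcases Set.mem_insert_iff.mp hg with rfl | hg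
        · exact ⟨hbS, hxb⟩
        · exact ⟨hsub g hg.1, hg.2⟩
      have hbnot : b ∉ {g ∈ p.ES | x ∈ G.ends g} := fun hcon => hbp hcon.1
      have hcard : 3 ≤ G.deg S x := by
        have h1 : (insert b {g ∈ p.ES | x ∈ G.ends g}).ncard =
            {g ∈ p.ES | x ∈ G.ends g}.ncard + 1 :=
          Set.ncard_insert_of_notMem hbnot (Set.toFinite _)
        have h2 := Set.ncard_le_ncard hins (Set.toFinite _)
        have : {g ∈ p.ES | x ∈ G.ends g}.ncard = 2 := hx2
        rw [deg]
        omega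
      have := hS.2.1 x
      omega
  exact hfp (key f hconn)

/-- Assembly: edge `e`, two disjoint paths to the cycle, and an arc of the cycle
make a cycle through `e`. -/
lemma assemble {u v x y : G.V} {e : G.E} (he : G.ends e = s(u, v)) {C : Set G.E}
    (heC : e ∉ C)
    (P1 : W G u x) (P2 : W G v y) (A : W G y x)
    (hP1nd : P1.support.Nodup) (hP2nd : P2.support.Nodup) (hAnd : A.support.Nodup)
    (hAC : ∀ f ∈ A.edges, f ∈ C)
    (hAsubT : ∀ w ∈ A.support, w ∈ G.verts C)
    (hP1T : ∀ w ∈ P1.support, w ∈ G.verts C → w = x)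
    (hP2T : ∀ w ∈ P2.support, w ∈ G.verts C → w = y)
    (hdisj : ∀ w, w ∈ P1.support → w ∉ P2.support)
    (hxy : x ≠ y) :
    ∃ Z : Set G.E, G.IsCycle Z ∧ e ∈ Z ∧
      G.signOf Z = G.sgn e * (P1.edges.map G.sgn).prod * (P2.edges.map G.sgn).prod *
        (A.edges.map G.sgn).prod := by
  have huP2 : u ∉ P2.support := hdisj u P1.start_mem_support
  have hvP1 : v ∉ P1.support := fun hcon => hdisj v hcon P2.start_mem_support
  set P1r := P1.reverse with hP1r
  have hP1rsup : ∀ w, w ∈ P1r.support ↔ w ∈ P1.support := fun w => by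
    rw [hP1r, W.support_reverse, List.mem_reverse]
  have hP1rnd : P1r.support.Nodup := by
    rw [hP1r, W.support_reverse]; exact List.nodup_reverse.mpr hP1nd
  set Z := W.cons e he (P2.append (A.append P1r)) with hZdef
  have hZsup : Z.support = u :: (P2.support ++ (A.support.tail ++ P1r.support.tail)) := by
    rw [hZdef, W.support_cons, W.support_append, W.support_append,
      tail_append_of_ne_nil A.support_ne_nil]
  have hyA : y ∉ A.support.tail := by
    have h := hAnd
    rw [A.support_eq_cons] at h
    exact (List.nodup_cons.mp h).1
  have hxP1r : x ∉ P1r.support.tail := by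
    have h := hP1rnd
    rw [P1r.support_eq_cons] at h
    exact (List.nodup_cons.mp h).1
  have hP1rtail : ∀ w ∈ P1r.support.tail, w ∈ P1.support :=
    fun w hw => (hP1rsup w).mp (List.mem_of_mem_tail hw)
  have hAtail : ∀ w ∈ A.support.tail, w ∈ A.support := fun w hw => List.mem_of_mem_tail hw
  have hsnodup : Z.support.tail.Nodup := by
    have hZt : Z.support.tail = P2.support ++ (A.support.tail ++ P1r.support.tail) := by
      rw [hZsup, List.tail_cons]
    rw [hZt]
    refine List.Nodup.append hP2nd
      (List.Nodup.append (List.Nodup.sublist (List.tail_sublist _) hAnd)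
        (List.Nodup.sublist (List.tail_sublist _) hP1rnd) ?_) ?_
    · intro w hw hw2
      have hwx := hP1T w (hP1rtail w hw2) (hAsubT w (hAtail w hw))
      subst hwx
      exact hxP1r hw2
    · intro w hw hw2
      rcases List.mem_append.mp hw2 with h | h
      · have hwy := hP2T w hw (hAsubT w (hAtail w h))
        subst hwy
        exact hyA h
      · exact hdisj w (hP1rtail w h) hw
  have hZed : Z.edges = e :: (P2.edges ++ (A.edges ++ P1r.edges)) := by
    rw [hZdef, W.edges_cons, W.edges_append, W.edges_append]
  have hP1red : ∀ f ∈ P1r.edges, f ∈ P1.edges := fun f hf => by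
    rw [hP1r, W.edges_reverse, List.mem_reverse] at hf
    exact hf
  have heP2 : e ∉ P2.edges := fun hcon =>
    huP2 (P2.mem_support_of_mem_ends hcon (by rw [he]; simp))
  have heA : e ∉ A.edges := fun hcon => heC (hAC e hcon)
  have heP1r : e ∉ P1r.edges := fun hcon =>
    hvP1 (P1.mem_support_of_mem_ends (hP1red e hcon) (by rw [he]; simp))
  have hP2A : ∀ g ∈ P2.edges, g ∉ A.edges := by
    intro g hg hg2
    obtain ⟨a, b, hab, hne⟩ := G.ends_rep g
    have ha := hP2T a (P2.mem_support_of_mem_ends hg (by rw [hab]; simp))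
      (hAsubT a (A.mem_support_of_mem_ends hg2 (by rw [hab]; simp)))
    have hb := hP2T b (P2.mem_support_of_mem_ends hg (by rw [hab]; simp))
      (hAsubT b (A.mem_support_of_mem_ends hg2 (by rw [hab]; simp)))
    exact hne (ha.trans hb.symm)
  have hP2P1 : ∀ g ∈ P2.edges, g ∉ P1r.edges := by
    intro g hg hg2
    obtain ⟨a, b, hab, hne⟩ := G.ends_rep g
    exact hdisj a (P1.mem_support_of_mem_ends (hP1red g hg2) (by rw [hab]; simp))
      (P2.mem_support_of_mem_ends hg (by rw [hab]; simp))
  have hAP1 : ∀ g ∈ A.edges, g ∉ P1r.edges := by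
    intro g hg hg2
    obtain ⟨a, b, hab, hne⟩ := G.ends_rep g
    have ha := hP1T a (P1.mem_support_of_mem_ends (hP1red g hg2) (by rw [hab]; simp))
      (hAsubT a (A.mem_support_of_mem_ends hg (by rw [hab]; simp)))
    have hb := hP1T b (P1.mem_support_of_mem_ends (hP1red g hg2) (by rw [hab]; simp))
      (hAsubT b (A.mem_support_of_mem_ends hg (by rw [hab]; simp)))
    exact hne (ha.trans hb.symm)
  have hednd : Z.edges.Nodup := by
    rw [hZed]
    refine List.nodup_cons.mpr ⟨?_, ?_⟩
    · intro hcon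
      rcases List.mem_append.mp hcon with h | h
      · exact heP2 h
      · rcases List.mem_append.mp h with h | h
        · exact heA h
        · exact heP1r h
    · refine List.Nodup.append (P2.edges_nodup_of_support_nodup hP2nd)
        (List.Nodup.append (A.edges_nodup_of_support_nodup hAnd)
          (P1r.edges_nodup_of_support_nodup hP1rnd) hAP1) ?_
      intro g hg hg2
      rcases List.mem_append.mp hg2 with h | h
      · exact hP2A g hg h
      · exact hP2P1 g hg h
  have hZc : Z.IsCirc := ⟨by rw [hZed]; simp, hednd, hsnodup⟩
  refine ⟨Z.ES, hZc.isCycle, by rw [W.mem_ES, hZed]; simp, ?_⟩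
  rw [Z.signOf_ES hednd, hZed]
  simp only [List.map_cons, List.map_append, List.prod_cons, List.prod_append]
  have hrev : (P1r.edges.map G.sgn).prod = (P1.edges.map G.sgn).prod := by
    rw [hP1r, W.edges_reverse, List.map_reverse, List.prod_reverse]
  rw [hrev]
  simp [mul_assoc, mul_comm, mul_left_comm]

lemma units_cancel_sq (q r s : ℤˣ) : (q * r) * (q * s) = r * s := by
  rw [mul_mul_mul_comm, Int.units_mul_self, one_mul]

lemma backward_dir (h2 : G.KConnected 2) {e : G.E} {C : Set G.E} (hC : G.IsCycle C)
    (heC : e ∉ C) (hsC : G.signOf C = -1) :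
    (∃ D, G.IsCycle D ∧ e ∈ D ∧ G.signOf D = 1) ∧
    (∃ D, G.IsCycle D ∧ e ∈ D ∧ G.signOf D = -1) := by
  obtain ⟨u, v, he, huv⟩ := G.ends_rep e
  obtain ⟨e', he'⟩ := hC.1
  obtain ⟨t1, t2, he2, ht12⟩ := G.ends_rep e'
  have ht1 : t1 ∈ G.verts C := ⟨e', he', by rw [he2]; simp⟩
  have ht2 : t2 ∈ G.verts C := ⟨e', he', by rw [he2]; simp⟩
  obtain ⟨x, y, P1, P2, hxT, hyT, hxy, hP1nd, hP2nd, hP1T, hP2T, hdisj⟩ :=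
    G.two_source h2 (G.verts C) ht1 ht2 ht12 huv
  obtain ⟨w, p, hp, hpe⟩ := G.rep_of_isCycle hC
  have hCes : C = p.ES := by
    ext f
    rw [W.mem_ES]
    exact (hpe f).symm
  have hverts : G.verts C = {z | z ∈ p.support} := by
    rw [hCes]
    exact hp.verts
  have hx : x ∈ p.support := by
    have := hxT
    rw [hverts] at this
    exact this
  set p' := p.rot hx with hp'def
  have hp'c : p'.IsCirc := p.rot_circ hx hp
  have hy : y ∈ p'.support := by
    refine (p.rot_support_mem hx y).mpr ?_
    have := hyT
    rw [hverts] at this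
    exact this
  obtain ⟨t, d, htnd, hdnd, hint, hedges, hsupiff⟩ := p'.split_circ hp'c hy (Ne.symm hxy)
  have hp'perm : p'.edges.Perm p.edges := p.rot_edges_perm hx
  have hedC : ∀ f ∈ p'.edges, f ∈ C := by
    intro f hf
    exact (hpe f).mp (hp'perm.mem_iff.mp hf)
  have hsupC : ∀ z ∈ p'.support, z ∈ G.verts C := by
    intro z hz
    rw [hverts]
    exact (p.rot_support_mem hx z).mp hz
  -- arc 1 : d : W y x
  have hdC : ∀ f ∈ d.edges, f ∈ C := by
    intro f hf
    exact hedC f (by rw [← hedges]; exact List.mem_append_right _ hf)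
  have hdsub : ∀ z ∈ d.support, z ∈ G.verts C := by
    intro z hz
    exact hsupC z ((hsupiff z).mpr (Or.inr hz))
  -- arc 2 : t.reverse : W y x
  have htrnd : t.reverse.support.Nodup := by
    rw [W.support_reverse]
    exact List.nodup_reverse.mpr htnd
  have htrC : ∀ f ∈ t.reverse.edges, f ∈ C := by
    intro f hf
    rw [W.edges_reverse, List.mem_reverse] at hf
    exact hedC f (by rw [← hedges]; exact List.mem_append_left _ hf)
  have htrsub : ∀ z ∈ t.reverse.support, z ∈ G.verts C := by
    intro z hz
    rw [W.support_reverse, List.mem_reverse] at hz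
    exact hsupC z ((hsupiff z).mpr (Or.inl hz))
  obtain ⟨Z1, hZ1c, heZ1, hs1⟩ := G.assemble he heC P1 P2 d hP1nd hP2nd hdnd hdC hdsub
    hP1T hP2T hdisj hxy
  obtain ⟨Z2, hZ2c, heZ2, hs2⟩ := G.assemble he heC P1 P2 t.reverse hP1nd hP2nd htrnd htrC
    htrsub hP1T hP2T hdisj hxy
  have hs2' : G.signOf Z2 = G.sgn e * (P1.edges.map G.sgn).prod * (P2.edges.map G.sgn).prod *
      (t.edges.map G.sgn).prod := by
    rw [hs2, W.edges_reverse, List.map_reverse, List.prod_reverse]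
  have hsplit : (t.edges.map G.sgn).prod * (d.edges.map G.sgn).prod = -1 := by
    have h1 : G.signOf C = (p.edges.map G.sgn).prod := by
      rw [hCes]
      exact p.signOf_ES hp.enodup
    have h2 : (p'.edges.map G.sgn).prod = (p.edges.map G.sgn).prod :=
      (hp'perm.map G.sgn).prod_eq
    have h3 : (p'.edges.map G.sgn).prod =
        (t.edges.map G.sgn).prod * (d.edges.map G.sgn).prod := by
      rw [← hedges, List.map_append, List.prod_append]
    rw [← h3, h2, ← h1, hsC]
  have hmul : G.signOf Z1 * G.signOf Z2 = -1 := by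
    rw [hs1, hs2']
    rw [show G.sgn e * (P1.edges.map G.sgn).prod * (P2.edges.map G.sgn).prod *
        (d.edges.map G.sgn).prod =
        (G.sgn e * (P1.edges.map G.sgn).prod * (P2.edges.map G.sgn).prod) *
        (d.edges.map G.sgn).prod from rfl]
    rw [show G.sgn e * (P1.edges.map G.sgn).prod * (P2.edges.map G.sgn).prod *
        (t.edges.map G.sgn).prod =
        (G.sgn e * (P1.edges.map G.sgn).prod * (P2.edges.map G.sgn).prod) *
        (t.edges.map G.sgn).prod from rfl]
    rw [units_cancel_sq, mul_comm]
    exact hsplit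
  rcases Int.units_eq_one_or (G.signOf Z1) with h1 | h1 <;>
    rcases Int.units_eq_one_or (G.signOf Z2) with h2 | h2
  · rw [h1, h2] at hmul
    exact absurd hmul (by decide)
  · exact ⟨⟨Z1, hZ1c, heZ1, h1⟩, ⟨Z2, hZ2c, heZ2, h2⟩⟩
  · exact ⟨⟨Z2, hZ2c, heZ2, h2⟩, ⟨Z1, hZ1c, heZ1, h1⟩⟩
  · rw [h1, h2] at hmul
    exact absurd hmul (by decide)

end SGraph

/-- In a 2-connected signed graph, an edge `e` appears in cycles of both signs
iff `G - e` is unbalanced. -/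
theorem stmt_0 (G : SGraph) (h2 : G.KConnected 2) (e : G.E) :
    ((∃ C, G.IsCycle C ∧ e ∈ C ∧ G.signOf C = 1) ∧
     (∃ C, G.IsCycle C ∧ e ∈ C ∧ G.signOf C = -1)) ↔
    (∃ C, G.IsCycle C ∧ e ∉ C ∧ G.signOf C = -1) := by
  constructor
  · rintro ⟨⟨Cp, hCp, hep, hsp⟩, ⟨Cm, hCm, hem, hsm⟩⟩
    exact G.forward_dir hCp hep hsp hCm hem hsm
  · rintro ⟨C, hC, heC, hsC⟩
    exact G.backward_dir h2 hC heC hsC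
end

section
/- Two signatures σ and σ' on the same underlying graph are equivalent (i.e., assign the same sign to every cycle) if and only if the set S of edges on which they differ is an edge-cut of the graph. -/
namespace SGraph

variable (G : SGraph)

/-- Walk predicate: `IsW u es vs w` means `es` is a list of edges of a walk from
`u` to `w`, and `vs` is the list of vertices reached after each step. -/
def IsW : G.V → List G.E → List G.V → G.V → Prop
  | u, [], [], w => u = w
  | u, e :: es, v :: vs, w => G.ends e = s(u, v) ∧ IsW v es vs w
  | _, _, _, _ => False

variable {G}

lemma isW_length {u w : G.V} : ∀ {es vs}, G.IsW u es vs w → es.length = vs.length := by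
  intro es
  induction es generalizing u with
  | nil => intro vs h; cases vs with
    | nil => rfl
    | cons v vs => exact absurd h (by simp [IsW])
  | cons e es ih =>
    intro vs h; cases vs with
    | nil => exact absurd h (by simp [IsW])
    | cons v vs => simpa using ih h.2

lemma isW_append {u x w : G.V} : ∀ {es1 vs1 es2 vs2}, G.IsW u es1 vs1 x →
    G.IsW x es2 vs2 w → G.IsW u (es1 ++ es2) (vs1 ++ vs2) w := by
  intro es1
  induction es1 generalizing u with
  | nil => intro vs1 es2 vs2 h1 h2; cases vs1 with
    | nil => cases h1; simpa using h2
    | cons v vs => exact absurd h1 (by simp [IsW])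
  | cons e es ih =>
    intro vs1 es2 vs2 h1 h2
    cases vs1 with
    | nil => exact absurd h1 (by simp [IsW])
    | cons v vs => exact ⟨h1.1, ih h1.2 h2⟩

/-- Split a walk at a visited vertex. -/
lemma isW_split {u w x : G.V} : ∀ (vs1 : List G.V) {es vs2}, G.IsW u es (vs1 ++ x :: vs2) w →
    ∃ es1 es2, es = es1 ++ es2 ∧ es1.length = vs1.length + 1 ∧
      G.IsW u es1 (vs1 ++ [x]) x ∧ G.IsW x es2 vs2 w := by
  intro vs1
  induction vs1 generalizing u with
  | nil =>
    intro es vs2 h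
    cases es with
    | nil => exact absurd h (by simp [IsW])
    | cons e es =>
      exact ⟨[e], es, rfl, rfl, ⟨h.1, rfl⟩, h.2⟩
  | cons v vs ih =>
    intro es vs2 h
    cases es with
    | nil => exact absurd h (by simp [IsW])
    | cons e es =>
      obtain ⟨es1, es2, rfl, hl, h1, h2⟩ := ih h.2
      exact ⟨e :: es1, es2, rfl, by simp [hl], ⟨h.1, h1⟩, h2⟩

/-- Reverse a walk. -/
lemma isW_reverse {u w : G.V} : ∀ {es vs}, G.IsW u es vs w →
    G.IsW w es.reverse ((u :: vs).dropLast.reverse) u := by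
  intro es
  induction es generalizing u with
  | nil => intro vs h; cases vs with
    | nil => cases h; simp [IsW]
    | cons v vs => exact absurd h (by simp [IsW])
  | cons e es ih =>
    intro vs h
    cases vs with
    | nil => exact absurd h (by simp [IsW])
    | cons v vs =>
      have := isW_append (ih h.2) (show G.IsW v [e] [u] u from ⟨by rw [h.1, Sym2.eq_swap], rfl⟩)
      simpa [List.dropLast_cons_of_ne_nil] using this

/-- Number of edges of the walk lying in `S`, with multiplicity. -/
noncomputable def cnt (S : Set G.E) (es : List G.E) : ℕ :=
  es.countP (fun e => @decide (e ∈ S) (Classical.dec _))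

lemma cnt_append (S : Set G.E) (es1 es2 : List G.E) :
    cnt S (es1 ++ es2) = cnt S es1 + cnt S es2 := List.countP_append

lemma cnt_reverse (S : Set G.E) (es : List G.E) : cnt S es.reverse = cnt S es :=
  (List.reverse_perm es).countP_eq _

section Dev
variable {G : SGraph}

lemma isW_getD (dv : G.V) (d : G.E) : ∀ {u : G.V} {es vs} {w : G.V}, G.IsW u es vs w →
    ∀ i, i < es.length →
    G.ends (es.getD i d) = s((u :: vs).getD i dv, (u :: vs).getD (i+1) dv) := by
  intro u es
  induction es generalizing u with
  | nil => intro vs w _ i hi; simp at hi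
  | cons e es ih =>
    intro vs w h i hi
    cases vs with
    | nil => exact absurd h (by simp [IsW])
    | cons v vs =>
      cases i with
      | zero => simpa using h.1
      | succ i =>
        have := ih h.2 i (by simpa using hi)
        simpa using this

lemma isW_end (dv : G.V) : ∀ {u : G.V} {es vs} {w : G.V}, G.IsW u es vs w →
    (u :: vs).getD vs.length dv = w := by
  intro u es
  induction es generalizing u with
  | nil => intro vs w h; cases vs with
    | nil => simpa using (show u = w from h)
    | cons v vs => exact absurd h (by simp [IsW])
  | cons e es ih =>
    intro vs w h
    cases vs with
    | nil => exact absurd h (by simp [IsW])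
    | cons v vs => simpa using ih h.2

lemma nodup_getD_inj {α : Type*} {l : List α} (h : l.Nodup) (d : α) {i j : ℕ}
    (hi : i < l.length) (hj : j < l.length) (he : l.getD i d = l.getD j d) : i = j := by
  rw [List.getD_eq_getElem l d hi, List.getD_eq_getElem l d hj] at he
  exact h.getElem_inj_iff.mp he

lemma list_len_two {α : Type*} (l : List α) (d : α) (h : l.length = 2) :
    l = [l.getD 0 d, l.getD 1 d] := by
  match l, h with
  | [a, b], _ => rfl

lemma ncard_cnt {es : List G.E} (hnd : es.Nodup) (S : Set G.E) :
    ({e | e ∈ es} ∩ S).ncard = cnt S es := by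
  classical
  set p : G.E → Bool := fun e => @decide (e ∈ S) (Classical.dec _) with hp
  have hps : ∀ e, p e = true ↔ e ∈ S := by
    intro e; simp [hp]
  have hset : {e | e ∈ es} ∩ S = ↑(es.filter p).toFinset := by
    ext f
    simp only [Set.mem_inter_iff, Set.mem_setOf_eq, Finset.coe_sort_coe, List.coe_toFinset,
      Set.mem_setOf_eq, List.mem_filter, Finset.mem_coe, List.mem_toFinset]
    rw [hps]
  rw [hset, Set.ncard_coe_finset, List.toFinset_card_of_nodup (hnd.filter p)]
  rw [cnt, List.countP_eq_length_filter]

/-- Simple closed walk: either a degenerate doubled edge (even count) or its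
edge set is a cycle, so the count is even by `Hpar`. -/
lemma simple_branch (S : Set G.E)
    (Hpar : ∀ C, G.IsCycle C → Even ((C ∩ S).ncard))
    {u : G.V} {es : List G.E} {vs : List G.V}
    (h : G.IsW u es vs u) (hvn : vs.Nodup) : Even (cnt S es) := by
  classical
  cases es with
  | nil => simp [cnt]
  | cons e0 es' =>
  set es : List G.E := e0 :: es' with hes
  set n := es.length with hn
  have hn1 : 1 ≤ n := by simp [hn, hes]
  have hlvs : vs.length = n := (isW_length h).symm
  set ws : ℕ → G.V := fun i => (u :: vs).getD i u with hws
  set ee : ℕ → G.E := fun i => es.getD i e0 with hee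
  have hstep : ∀ i, i < n → G.ends (ee i) = s(ws i, ws (i+1)) :=
    fun i hi => isW_getD u e0 h i hi
  have hend : ws n = u := by
    have := isW_end u h
    rwa [hlvs] at this
  have hws0 : ws 0 = u := by simp [hws]
  have hwsS : ∀ j, ws (j + 1) = vs.getD j u := by intro j; simp [hws]
  have hinj : ∀ i j, i < n → j < n → ws i = ws j → i = j := by
    have hlast : vs.getD (n - 1) u = u := by
      rw [← hwsS (n - 1)]
      have : n - 1 + 1 = n := by omega
      rw [this, hend]
    intro i j hi hj hij
    match i, j with
    | 0, 0 => rfl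
    | 0, (j + 1) =>
      exfalso
      rw [hws0, hwsS] at hij
      have := nodup_getD_inj hvn u (i := j) (j := n - 1) (by omega) (by omega)
        (by rw [← hij, hlast])
      omega
    | (i + 1), 0 =>
      exfalso
      rw [hws0, hwsS] at hij
      have := nodup_getD_inj hvn u (i := i) (j := n - 1) (by omega) (by omega)
        (by rw [hij, hlast])
      omega
    | (i + 1), (j + 1) =>
      rw [hwsS, hwsS] at hij
      have := nodup_getD_inj hvn u (i := i) (j := j) (by omega) (by omega) hij
      omega
  rcases Nat.lt_or_ge n 2 with hn2 | hn2
  · exfalso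
    have := hstep 0 (by omega)
    rw [show (0 : ℕ) + 1 = n from by omega, hend, hws0] at this
    exact G.loopless (ee 0) (by rw [this]; exact Sym2.mk_isDiag_iff.mpr rfl)
  by_cases hnd : es.Nodup
  swap
  · -- duplicate edge: forces n = 2 and the two edges equal
    rw [List.nodup_iff_injective_get] at hnd
    rw [Function.not_injective_iff] at hnd
    obtain ⟨⟨i, hi⟩, ⟨j, hj⟩, hij, hne⟩ := hnd
    simp only [List.get_eq_getElem] at hij
    have hne' : i ≠ j := fun hh => hne (Fin.ext hh)
    have heq : ∀ i j, i < j → j < n → ee i = ee j → (i = 0 ∧ j = 1 ∧ n = 2) := by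
      intro i j hlt hjn hij
      have h1 : s(ws i, ws (i+1)) = s(ws j, ws (j+1)) := by
        rw [← hstep i (by omega), ← hstep j hjn, hij]
      rcases Sym2.eq_iff.mp h1 with ⟨ha, _⟩ | ⟨ha, hb⟩
      · exact absurd (hinj i j (by omega) hjn ha) (by omega)
      · have hij1 : i + 1 = j := hinj (i+1) j (by omega) hjn hb
        rcases Nat.lt_or_ge (j+1) n with hj1 | hj1
        · exact absurd (hinj i (j+1) (by omega) hj1 ha) (by omega)
        · have hj1' : j + 1 = n := by omega
          have h0 : ws i = ws 0 := by rw [ha, hj1', hend, hws0]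
          have hi0 : i = 0 := hinj i 0 (by omega) (by omega) h0
          exact ⟨hi0, by omega, by omega⟩
    have heg : ee i = ee j := by
      rw [hee]; simp only []
      rw [List.getD_eq_getElem es e0 hi, List.getD_eq_getElem es e0 hj]
      exact hij
    have hfin : n = 2 ∧ ee 0 = ee 1 := by
      rcases Nat.lt_or_ge i j with hlt | hge
      · obtain ⟨h0, h1, h2⟩ := heq i j hlt hj heg
        exact ⟨h2, by rw [← h0, ← h1, heg]⟩
      · have hlt : j < i := by omega
        obtain ⟨h0, h1, h2⟩ := heq j i hlt hi heg.symm
        exact ⟨h2, by rw [← h0, ← h1, heg]⟩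
    obtain ⟨h2, hee01⟩ := hfin
    have hform : es = [ee 0, ee 1] := list_len_two es e0 (by rw [← hn, h2])
    rw [show cnt S es = cnt S [ee 0, ee 1] from by rw [← hform], ← hee01]
    rcases Bool.eq_false_or_eq_true (@decide (ee 0 ∈ S) (Classical.dec _)) with hb | hb <;>
      simp [cnt, List.countP_cons, hb]
  · -- the edge set is a cycle
    have hEinj : ∀ i j, i < n → j < n → ee i = ee j → i = j := by
      intro i j hi hj hij
      exact nodup_getD_inj hnd e0 hi hj hij
    have hmem : ∀ f, f ∈ es ↔ ∃ i, i < n ∧ f = ee i := by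
      intro f
      constructor
      · intro hf
        obtain ⟨i, hi, rfl⟩ := List.getElem_of_mem hf
        exact ⟨i, hi, (List.getD_eq_getElem es e0 hi).symm⟩
      · rintro ⟨i, hi, rfl⟩
        rw [hee]; simp only []
        rw [List.getD_eq_getElem es e0 hi]
        exact List.getElem_mem _
    set C : Set G.E := {e | e ∈ es} with hC
    have hcyc : G.IsCycle C := by
      refine ⟨⟨e0, by simp [hC, hes]⟩, ?_, ?_⟩
      · intro v
        by_cases hv : ∃ k, k < n ∧ v = ws k
        · right
          obtain ⟨k, hk, rfl⟩ := hv
          set p := if k = 0 then n - 1 else k - 1 with hp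
          have hpn : p < n := by rw [hp]; split <;> omega
          have hkp : k ≠ p := by rw [hp]; split <;> omega
          have hset : {e ∈ C | ws k ∈ G.ends e} = {ee k, ee p} := by
            ext f
            simp only [Set.mem_setOf_eq, Set.mem_insert_iff, Set.mem_singleton_iff, hC]
            constructor
            · rintro ⟨hf, hvf⟩
              obtain ⟨j, hj, rfl⟩ := (hmem f).mp hf
              rw [hstep j hj, Sym2.mem_iff] at hvf
              rcases hvf with hvf | hvf
              · left; rw [hinj k j hk hj hvf]
              · right
                rcases Nat.lt_or_ge (j+1) n with hj1 | hj1
                · have hjk : j + 1 = k := hinj (j+1) k hj1 hk hvf.symm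
                  exact congrArg ee (by rw [hp]; split <;> omega)
                · have hj1' : j + 1 = n := by omega
                  rw [hj1', hend, ← hws0] at hvf
                  have hk0 : k = 0 := hinj k 0 hk (by omega) hvf
                  exact congrArg ee (by rw [hp]; split <;> omega)
            · rintro (rfl | rfl)
              · refine ⟨(hmem _).mpr ⟨k, hk, rfl⟩, ?_⟩
                rw [hstep k hk, Sym2.mem_iff]; left; rfl
              · refine ⟨(hmem _).mpr ⟨p, hpn, rfl⟩, ?_⟩
                rw [hstep p hpn, Sym2.mem_iff]
                rcases eq_or_ne k 0 with hk0 | hk0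
                · right
                  have hpn' : p + 1 = n := by rw [hp]; split <;> omega
                  rw [hpn', hend, ← hws0, hk0]
                · right
                  have hpk : p + 1 = k := by rw [hp]; split <;> omega
                  rw [hpk]
          have hd : G.deg C (ws k) = ({ee k, ee p} : Set G.E).ncard := by
            unfold SGraph.deg; rw [hset]
          rw [hd]
          exact Set.ncard_pair (fun hc => hkp (hEinj k p hk hpn hc))
        · left
          have hset : {e ∈ C | v ∈ G.ends e} = (∅ : Set G.E) := by
            ext f
            simp only [Set.mem_setOf_eq, Set.mem_empty_iff_false, iff_false, not_and, hC]
            intro hf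
            obtain ⟨j, hj, rfl⟩ := (hmem f).mp hf
            rw [hstep j hj, Sym2.mem_iff]
            rintro (rfl | rfl)
            · exact hv ⟨j, hj, rfl⟩
            · rcases Nat.lt_or_ge (j+1) n with hj1 | hj1
              · exact hv ⟨j+1, hj1, rfl⟩
              · have hj1' : j + 1 = n := by omega
                rw [hj1', hend, ← hws0] at hv
                exact hv ⟨0, by omega, rfl⟩
          unfold SGraph.deg; rw [hset, Set.ncard_empty]
      · set r : G.E → G.E → Prop :=
          fun a b => a ∈ C ∧ b ∈ C ∧ ∃ v, v ∈ G.ends a ∧ v ∈ G.ends b with hr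
        have hsym : Symmetric r := by
          rintro a b ⟨h1, h2, v, h3, h4⟩; exact ⟨h2, h1, v, h4, h3⟩
        have hreach : ∀ i, i < n → Relation.ReflTransGen r (ee 0) (ee i) := by
          intro i
          induction i with
          | zero => intro _; exact Relation.ReflTransGen.refl
          | succ i ih =>
            intro hi
            refine Relation.ReflTransGen.tail (ih (by omega)) ?_
            refine ⟨(hmem _).mpr ⟨i, by omega, rfl⟩, (hmem _).mpr ⟨i+1, hi, rfl⟩,
              ws (i+1), ?_, ?_⟩
            · rw [hstep i (by omega), Sym2.mem_iff]; right; rfl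
            · rw [hstep (i+1) hi, Sym2.mem_iff]; left; rfl
        intro a ha b hb
        obtain ⟨i, hi, rfl⟩ := (hmem a).mp ha
        obtain ⟨j, hj, rfl⟩ := (hmem b).mp hb
        exact Relation.ReflTransGen.trans
          ((@Relation.ReflTransGen.stdSymm _ _ ⟨fun _ _ h => hsym h⟩).symm _ _ (hreach i hi)) (hreach j hj)
    have := Hpar C hcyc
    rwa [ncard_cnt hnd S] at this

end Dev

section Dev2
variable {G : SGraph}

lemma dup_split {α : Type*} [DecidableEq α] {l : List α} (h : ¬ l.Nodup) :
    ∃ (l1 l3 : List α) (x : α) (l2 : List α), l = l1 ++ x :: (l2 ++ x :: l3) := by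
  rw [List.nodup_iff_count_le_one] at h
  push_neg at h
  obtain ⟨a, ha⟩ := h
  have hm : a ∈ l := by
    rw [← List.count_pos_iff]; omega
  obtain ⟨s, t, rfl⟩ := List.append_of_mem hm
  rw [List.count_append, List.count_cons_self] at ha
  have : a ∈ s ∨ a ∈ t := by
    rcases Nat.lt_or_ge 0 (List.count a s) with hc | hc
    · left; rwa [← List.count_pos_iff]
    · right; rw [← List.count_pos_iff]; omega
  rcases this with hs | ht
  · obtain ⟨p, q, rfl⟩ := List.append_of_mem hs
    exact ⟨p, t, a, q, by simp⟩
  · obtain ⟨p, q, rfl⟩ := List.append_of_mem ht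
    exact ⟨s, q, a, p, by simp⟩

/-- No closed walk has an odd number of edges in `S`. -/
lemma even_closed (S : Set G.E)
    (Hpar : ∀ C, G.IsCycle C → Even ((C ∩ S).ncard)) :
    ∀ (N : ℕ) (es : List G.E) (vs : List G.V) (u : G.V), es.length ≤ N →
      G.IsW u es vs u → Even (cnt S es) := by
  intro N
  induction N with
  | zero =>
    intro es vs u hle h
    have : es = [] := List.length_eq_zero_iff.mp (by omega)
    subst this; simp [cnt]
  | succ N ih =>
    intro es vs u hle h
    by_cases hvn : vs.Nodup
    · exact simple_branch S Hpar h hvn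
    · obtain ⟨l1, l3, x, l2, rfl⟩ := dup_split hvn
      obtain ⟨es1, es2, rfl, hl1, hw1, hw2⟩ := isW_split l1 h
      obtain ⟨es3, es4, rfl, hl3, hw3, hw4⟩ := isW_split l2 hw2
      have hlen : es1.length + es3.length + es4.length ≤ N + 1 := by
        have := hle; simpa [Nat.add_assoc] using this
      have hodd1 : Even (cnt S es3) :=
        ih es3 (l2 ++ [x]) x (by omega) hw3
      have hw14 : G.IsW u (es1 ++ es4) ((l1 ++ [x]) ++ l3) u := isW_append hw1 hw4
      have hodd2 : Even (cnt S (es1 ++ es4)) := by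
        refine ih (es1 ++ es4) ((l1 ++ [x]) ++ l3) u ?_ hw14
        rw [List.length_append]; omega
      rw [cnt_append] at hodd2
      rw [cnt_append, cnt_append]
      rcases hodd1 with ⟨a, ha⟩
      rcases hodd2 with ⟨b, hb⟩
      exact ⟨a + b, by omega⟩

/-- Adjacency. -/
def Adj (G : SGraph) (a b : G.V) : Prop := ∃ e, G.ends e = s(a, b)

lemma adj_symm : Symmetric G.Adj := by
  rintro a b ⟨e, he⟩; exact ⟨e, by rw [he, Sym2.eq_swap]⟩

/-- Connectivity setoid on vertices. -/
def vSetoid (G : SGraph) : Setoid G.V :=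
  ⟨Relation.ReflTransGen G.Adj,
    ⟨fun _ => Relation.ReflTransGen.refl,
     fun h => (@Relation.ReflTransGen.stdSymm _ _ ⟨fun _ _ h => adj_symm h⟩).symm _ _ h,
     fun h1 h2 => Relation.ReflTransGen.trans h1 h2⟩⟩

noncomputable def base (G : SGraph) (v : G.V) : G.V :=
  (@Quotient.mk _ G.vSetoid v).out

lemma base_reach (v : G.V) : Relation.ReflTransGen G.Adj (G.base v) v :=
  @Quotient.mk_out _ G.vSetoid v

lemma base_adj {a b : G.V} (h : G.Adj a b) : G.base a = G.base b := by
  unfold SGraph.base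
  congr 1
  exact Quotient.sound (Relation.ReflTransGen.single h)

lemma walk_of_reach_s2 {a b : G.V} (h : Relation.ReflTransGen G.Adj a b) :
    ∃ es vs, G.IsW a es vs b := by
  induction h with
  | refl => exact ⟨[], [], rfl⟩
  | tail _ hadj ih =>
    obtain ⟨es, vs, hw⟩ := ih
    obtain ⟨e, he⟩ := hadj
    exact ⟨es ++ [e], vs ++ [_], isW_append hw ⟨he, rfl⟩⟩

/-- Connection with odd / even number of `S`-edges. -/
def OddCon (G : SGraph) (S : Set G.E) (u v : G.V) : Prop :=
  ∃ es vs, G.IsW u es vs v ∧ Odd (cnt S es)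

def EvenCon (G : SGraph) (S : Set G.E) (u v : G.V) : Prop :=
  ∃ es vs, G.IsW u es vs v ∧ Even (cnt S es)

lemma not_both (S : Set G.E) (Hpar : ∀ C, G.IsCycle C → Even ((C ∩ S).ncard))
    {u v : G.V} (ho : G.OddCon S u v) (he : G.EvenCon S u v) : False := by
  obtain ⟨es1, vs1, hw1, h1⟩ := ho
  obtain ⟨es2, vs2, hw2, h2⟩ := he
  have hrev := isW_reverse hw2
  have hw := isW_append hw1 hrev
  have := even_closed S Hpar _ _ _ _ (le_refl _) hw
  rw [cnt_append, cnt_reverse] at this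
  rcases h1 with ⟨a, ha⟩
  rcases h2 with ⟨b, hb⟩
  rcases this with ⟨c, hc⟩
  omega

lemma con_extend (S : Set G.E) {r a b : G.V} {e : G.E} (he : G.ends e = s(a, b)) :
    (G.OddCon S r a → (e ∈ S → G.EvenCon S r b) ∧ (e ∉ S → G.OddCon S r b)) ∧
    (G.EvenCon S r a → (e ∈ S → G.OddCon S r b) ∧ (e ∉ S → G.EvenCon S r b)) := by
  classical
  have step : ∀ es vs, G.IsW r es vs a → G.IsW r (es ++ [e]) (vs ++ [b]) b :=
    fun es vs hw => isW_append hw ⟨he, rfl⟩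
  have hcnt : ∀ es : List G.E, cnt S (es ++ [e]) = cnt S es + (if e ∈ S then 1 else 0) := by
    intro es
    rw [cnt_append]
    congr 1
    by_cases heS : e ∈ S <;> simp [cnt, List.countP_cons, heS]
  constructor
  · rintro ⟨es, vs, hw, hodd⟩
    constructor <;> intro heS
    · exact ⟨es ++ [e], vs ++ [b], step es vs hw, by
        rw [hcnt es]; simp [heS]; rcases hodd with ⟨c, hc⟩; exact ⟨c + 1, by omega⟩⟩
    · exact ⟨es ++ [e], vs ++ [b], step es vs hw, by rw [hcnt es]; simp [heS]; exact hodd⟩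
  · rintro ⟨es, vs, hw, heven⟩
    constructor <;> intro heS
    · exact ⟨es ++ [e], vs ++ [b], step es vs hw, by
        rw [hcnt es]; simp [heS]; rcases heven with ⟨c, hc⟩; exact ⟨c, by omega⟩⟩
    · exact ⟨es ++ [e], vs ++ [b], step es vs hw, by rw [hcnt es]; simp [heS]; exact heven⟩

end Dev2

section Dev3
variable {G : SGraph}

lemma sym2_rep (z : Sym2 G.V) : ∃ a b, z = s(a, b) :=
  Sym2.ind (fun x y => ⟨x, y, rfl⟩) z

lemma units_neg_one_pow_iff (m : ℕ) : ((-1 : ℤˣ)) ^ m = 1 ↔ Even m := by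
  constructor
  · intro h; by_contra ho
    rw [Nat.not_even_iff_odd] at ho
    rw [Odd.neg_one_pow ho] at h; exact absurd h (by decide)
  · intro h; exact Even.neg_one_pow h

lemma prod_ite_ncard (C S : Set G.E) [DecidablePred (· ∈ S)] :
    (∏ e ∈ (Set.toFinite C).toFinset, (if e ∈ S then (-1 : ℤˣ) else 1)) =
      (-1) ^ ((C ∩ S).ncard) := by
  have h1 : C ∩ S = ↑((Set.toFinite C).toFinset.filter (fun e => e ∈ S)) := by
    ext f
    constructor
    · rintro ⟨ha, hb⟩
      simp [Set.Finite.mem_toFinset, ha, hb]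
    · intro hf
      simp only [Finset.coe_filter, Set.Finite.mem_toFinset, Set.mem_setOf_eq] at hf
      exact ⟨hf.1, hf.2⟩
  rw [Finset.prod_ite, Finset.prod_const, Finset.prod_const, one_pow, mul_one, h1,
    Set.ncard_coe_finset]

lemma cut_even {S : Set G.E} (h : G.EdgeCut S) {C : Set G.E} (hC : G.IsCycle C) :
    Even ((C ∩ S).ncard) := by
  classical
  obtain ⟨X, hX⟩ := h
  set χ : G.V → ℤˣ := fun v => if v ∈ X then -1 else 1 with hχ
  set F := (Set.toFinite C).toFinset with hF
  have hmemF : ∀ e, e ∈ F ↔ e ∈ C := fun e => Set.Finite.mem_toFinset _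
  have hone : ∀ e, (if e ∈ S then (-1 : ℤˣ) else 1) =
      ∏ v ∈ Finset.univ.filter (· ∈ G.ends e), χ v := by
    intro e
    obtain ⟨a, b, hab⟩ := sym2_rep (G.ends e)
    have hne : a ≠ b := by
      intro hh
      exact G.loopless e (by rw [hab, hh]; exact Sym2.mk_isDiag_iff.mpr rfl)
    have hfil : Finset.univ.filter (· ∈ G.ends e) = {a, b} := by
      ext v
      simp [hab, Sym2.mem_iff]
    have hiff : e ∈ S ↔ ((a ∈ X ∧ b ∉ X) ∨ (b ∈ X ∧ a ∉ X)) := by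
      rw [hX e]
      constructor
      · rintro ⟨a', b', hab', ha', hb'⟩
        rw [hab] at hab'
        rcases Sym2.eq_iff.mp hab' with ⟨rfl, rfl⟩ | ⟨rfl, rfl⟩
        · left; exact ⟨ha', hb'⟩
        · right; exact ⟨ha', hb'⟩
      · rintro (⟨h1, h2⟩ | ⟨h1, h2⟩)
        · exact ⟨a, b, hab, h1, h2⟩
        · exact ⟨b, a, by rw [hab, Sym2.eq_swap], h1, h2⟩
    rw [hfil, Finset.prod_pair hne]
    by_cases ha : a ∈ X <;> by_cases hb : b ∈ X <;>
      simp [hχ, ha, hb, hiff]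
  have hdeg : ∀ v, (F.filter (fun e => v ∈ G.ends e)).card = G.deg C v := by
    intro v
    have : {e ∈ C | v ∈ G.ends e} = ↑(F.filter (fun e => v ∈ G.ends e)) := by
      ext f; simp [hmemF]
    unfold SGraph.deg
    rw [this, Set.ncard_coe_finset]
  have hprod : (∏ e ∈ F, (if e ∈ S then (-1 : ℤˣ) else 1)) = 1 := by
    rw [Finset.prod_congr rfl (fun e _ => hone e)]
    have : ∀ e ∈ F, (∏ v ∈ Finset.univ.filter (· ∈ G.ends e), χ v) =
        ∏ v ∈ Finset.univ, if v ∈ G.ends e then χ v else 1 := by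
      intro e _; rw [Finset.prod_filter]
    rw [Finset.prod_congr rfl this, Finset.prod_comm]
    have h2 : ∀ v ∈ Finset.univ (α := G.V), (∏ e ∈ F, if v ∈ G.ends e then χ v else 1) = 1 := by
      intro v _
      rw [← Finset.prod_filter, Finset.prod_const, hdeg v]
      rcases hC.2.1 v with hv | hv <;> rw [hv]
      · exact pow_zero _
      · exact Int.units_sq (χ v)
    rw [Finset.prod_congr rfl h2, Finset.prod_const_one]
  rw [hF] at hprod
  rw [← units_neg_one_pow_iff, ← prod_ite_ncard C S, hprod]

/-- The key combinatorial lemma. -/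
lemma key (S : Set G.E) :
    (∀ C, G.IsCycle C → Even ((C ∩ S).ncard)) ↔ G.EdgeCut S := by
  constructor
  · intro Hpar
    classical
    set X : Set G.V := {v | G.OddCon S (G.base v) v} with hXdef
    have hEx : ∀ a : G.V, G.EvenCon S (G.base a) a ∨ G.OddCon S (G.base a) a := by
      intro a
      obtain ⟨es, vs, hw⟩ := walk_of_reach_s2 (base_reach a)
      rcases Nat.even_or_odd (cnt S es) with he | ho
      · left; exact ⟨es, vs, hw, he⟩
      · right; exact ⟨es, vs, hw, ho⟩
    have hnotin : ∀ a : G.V, a ∉ X ↔ G.EvenCon S (G.base a) a := by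
      intro a; constructor
      · intro ha; rcases hEx a with he | ho
        · exact he
        · exact absurd ho ha
      · intro he ha; exact not_both S Hpar ha he
    have hcross : ∀ e a b, G.ends e = s(a, b) →
        (e ∈ S → (a ∈ X ↔ b ∉ X)) ∧ (e ∉ S → (a ∈ X ↔ b ∈ X)) := by
      intro e a b hab
      have hbb : G.base a = G.base b := base_adj ⟨e, hab⟩
      obtain ⟨hOdd, hEven⟩ := con_extend (G := G) S (r := G.base a) hab
      constructor
      · intro heS
        constructor
        · intro haX
          rw [hnotin b, ← hbb]
          exact (hOdd haX).1 heS
        · intro hbX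
          by_contra haX
          have hob := (hEven ((hnotin a).mp haX)).1 heS
          rw [hbb] at hob
          exact hbX hob
      · intro heS
        constructor
        · intro haX
          have hob := (hOdd haX).2 heS
          rwa [hbb] at hob
        · intro hbX
          by_contra haX
          have heb := (hEven ((hnotin a).mp haX)).2 heS
          rw [hbb] at heb
          exact not_both S Hpar hbX heb
    refine ⟨X, fun e => ⟨?_, ?_⟩⟩
    · intro heS
      obtain ⟨a, b, hab⟩ := sym2_rep (G.ends e)
      have hcr := (hcross e a b hab).1 heS
      by_cases haX : a ∈ X
      · exact ⟨a, b, hab, haX, hcr.mp haX⟩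
      · have hbX : b ∈ X := by
          by_contra hbX
          exact haX (hcr.mpr hbX)
        exact ⟨b, a, by rw [hab, Sym2.eq_swap], hbX, haX⟩
    · rintro ⟨a, b, hab, haX, hbX⟩
      by_contra heS
      exact hbX (((hcross e a b hab).2 heS).mp haX)
  · intro hcut C hC; exact cut_even hcut hC

end Dev3


end SGraph

/-- Two signatures on the same graph give every cycle the same sign iff the set of
edges on which they differ is an edge-cut. -/
theorem stmt_2 (G : SGraph) (σ' : G.E → ℤˣ) :
    (∀ C, G.IsCycle C → (∏ᶠ e ∈ C, σ' e) = G.signOf C) ↔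
    G.EdgeCut {e | σ' e ≠ G.sgn e} := by
  classical
  set S : Set G.E := {e | σ' e ≠ G.sgn e} with hS
  have main : ∀ C, G.IsCycle C →
      ((∏ᶠ e ∈ C, σ' e) = G.signOf C ↔ Even ((C ∩ S).ncard)) := by
    intro C hC
    set F := (Set.toFinite C).toFinset with hF
    have hCF : C = ↑F := (Set.Finite.coe_toFinset _).symm
    have h1 : (∏ᶠ e ∈ C, σ' e) = ∏ e ∈ F, σ' e := by
      rw [hCF]; exact finprod_mem_coe_finset _ _
    have h2 : G.signOf C = ∏ e ∈ F, G.sgn e := by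
      rw [SGraph.signOf, hCF]; exact finprod_mem_coe_finset _ _
    have h3 : ∀ e, σ' e = G.sgn e * (if e ∈ S then -1 else 1) := by
      intro e
      by_cases he : e ∈ S
      · simp only [he, if_true]
        have h4 : σ' e ≠ G.sgn e := he
        rcases Int.units_eq_one_or (σ' e) with h5 | h5 <;>
          rcases Int.units_eq_one_or (G.sgn e) with h6 | h6 <;>
          rw [h5, h6] at h4 ⊢ <;> first | rfl | (exact absurd rfl h4) | decide
      · simp only [he, if_false, mul_one]
        have : ¬ (σ' e ≠ G.sgn e) := he
        exact not_not.mp this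
    rw [h1, h2, Finset.prod_congr rfl (fun e _ => h3 e), Finset.prod_mul_distrib]
    rw [show (∏ e ∈ F, if e ∈ S then (-1 : ℤˣ) else 1) = (-1) ^ ((C ∩ S).ncard) from
      SGraph.prod_ite_ncard C S]
    constructor
    · intro hEq
      rw [← SGraph.units_neg_one_pow_iff]
      exact mul_eq_left.mp hEq
    · intro hEv
      rw [(SGraph.units_neg_one_pow_iff _).mpr hEv, mul_one]
  have hiff : (∀ C, G.IsCycle C → (∏ᶠ e ∈ C, σ' e) = G.signOf C) ↔
      (∀ C, G.IsCycle C → Even ((C ∩ S).ncard)) :=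
    forall_congr' fun C => imp_congr_right fun hC => main C hC
  rw [hiff]
  exact SGraph.key S
end

section
/- In the hedgehog signed graph — consisting of a negative triangle C on vertices x₁, x₂, x₃, two additional vertices y₁, y₂, and all six edges between {y₁, y₂} and {x₁, x₂, x₃}, with e₁ = x₁y₁ and e₂ = x₂y₂ — the edges e₁ and e₂ are untied. -/
namespace SGraph

/-- `G` is a hat: a negative 2-cycle `C` on `x₁, x₂` plus a vertex `y` and
edges `e₁ = x₁y`, `e₂ = x₂y`. -/
def IsHat (G : SGraph) (C : Set G.E) (e₁ e₂ : G.E) : Prop :=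
  ∃ (x₁ x₂ y : G.V) (f₁ f₂ : G.E),
    ([x₁, x₂, y] : List G.V).Nodup ∧ (∀ v : G.V, v ∈ [x₁, x₂, y]) ∧
    ([f₁, f₂, e₁, e₂] : List G.E).Nodup ∧ (∀ e : G.E, e ∈ [f₁, f₂, e₁, e₂]) ∧
    G.ends f₁ = s(x₁, x₂) ∧ G.ends f₂ = s(x₁, x₂) ∧ G.sgn f₁ * G.sgn f₂ = -1 ∧
    G.ends e₁ = s(x₁, y) ∧ G.ends e₂ = s(x₂, y) ∧
    C = {f₁, f₂}

/-- `G` is a target: a negative 4-cycle `C` on `x₁x₂x₃x₄` with chords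
`e₁ = x₁x₃` and `e₂ = x₂x₄`. -/
def IsTarget (G : SGraph) (C : Set G.E) (e₁ e₂ : G.E) : Prop :=
  ∃ (x₁ x₂ x₃ x₄ : G.V) (c₁ c₂ c₃ c₄ : G.E),
    ([x₁, x₂, x₃, x₄] : List G.V).Nodup ∧ (∀ v : G.V, v ∈ [x₁, x₂, x₃, x₄]) ∧
    ([c₁, c₂, c₃, c₄, e₁, e₂] : List G.E).Nodup ∧
    (∀ e : G.E, e ∈ [c₁, c₂, c₃, c₄, e₁, e₂]) ∧
    G.ends c₁ = s(x₁, x₂) ∧ G.ends c₂ = s(x₂, x₃) ∧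
    G.ends c₃ = s(x₃, x₄) ∧ G.ends c₄ = s(x₄, x₁) ∧
    G.sgn c₁ * G.sgn c₂ * G.sgn c₃ * G.sgn c₄ = -1 ∧
    G.ends e₁ = s(x₁, x₃) ∧ G.ends e₂ = s(x₂, x₄) ∧
    C = {c₁, c₂, c₃, c₄}

/-- `G` is a hedgehog: a negative triangle `C` on `x₁, x₂, x₃` plus vertices
`y₁, y₂` joined to all the `xⱼ`, with `e₁ = x₁y₁` and `e₂ = x₂y₂`. -/
def IsHedgehog (G : SGraph) (C : Set G.E) (e₁ e₂ : G.E) : Prop :=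
  ∃ (x₁ x₂ x₃ y₁ y₂ : G.V) (c₁ c₂ c₃ a₁₂ a₁₃ a₂₁ a₂₃ : G.E),
    ([x₁, x₂, x₃, y₁, y₂] : List G.V).Nodup ∧ (∀ v : G.V, v ∈ [x₁, x₂, x₃, y₁, y₂]) ∧
    ([c₁, c₂, c₃, e₁, a₁₂, a₁₃, a₂₁, a₂₃, e₂] : List G.E).Nodup ∧
    (∀ e : G.E, e ∈ [c₁, c₂, c₃, e₁, a₁₂, a₁₃, a₂₁, a₂₃, e₂]) ∧
    G.ends c₁ = s(x₁, x₂) ∧ G.ends c₂ = s(x₂, x₃) ∧ G.ends c₃ = s(x₃, x₁) ∧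
    G.sgn c₁ * G.sgn c₂ * G.sgn c₃ = -1 ∧
    G.ends e₁ = s(x₁, y₁) ∧ G.ends a₁₂ = s(x₂, y₁) ∧ G.ends a₁₃ = s(x₃, y₁) ∧
    G.ends a₂₁ = s(x₁, y₂) ∧ G.ends e₂ = s(x₂, y₂) ∧ G.ends a₂₃ = s(x₃, y₂) ∧
    C = {c₁, c₂, c₃}

end SGraph


namespace SGraphProofAux

open SGraph

lemma keyprod (e₁ a₁₂ e₂ a₂₁ a₁₃ c₂ a₂₃ c₃ c₁ : ℤˣ) :
    (e₁ * a₁₂ * e₂ * a₂₁) * (e₁ * a₁₃ * c₂ * e₂ * a₂₁) * (e₁ * a₁₂ * e₂ * a₂₃ * c₃) *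
      (e₁ * c₁ * e₂ * a₂₃ * a₁₃) = c₁ * c₂ * c₃ := by
  have h : ∀ u v : ℤˣ, u * (u * v) = v := fun u v => by
    rw [← mul_assoc, Int.units_mul_self, one_mul]
  simp [mul_comm, mul_left_comm, mul_assoc, Int.units_mul_self, h]

lemma both_signs (a b c d : ℤˣ) (h : a * b * c * d = -1) :
    (a = 1 ∨ b = 1 ∨ c = 1 ∨ d = 1) ∧ (a = -1 ∨ b = -1 ∨ c = -1 ∨ d = -1) := by
  rcases Int.units_eq_one_or a with rfl|rfl <;> rcases Int.units_eq_one_or b with rfl|rfl <;>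
    rcases Int.units_eq_one_or c with rfl|rfl <;> rcases Int.units_eq_one_or d with rfl|rfl <;>
    simp_all

open Classical in
lemma deg_coe (G : SGraph) (F : Finset G.E) (v : G.V) :
    G.deg ↑F v = (F.filter (fun e => v ∈ G.ends e)).card := by
  classical
  rw [SGraph.deg, ← Set.ncard_coe_finset]
  congr 1
  ext e
  simp

open Classical in
lemma signOf_coe (G : SGraph) (F : Finset G.E) :
    G.signOf ↑F = ∏ e ∈ F, G.sgn e := by
  rw [SGraph.signOf, finprod_mem_coe_finset]

lemma conn_of_base (G : SGraph) (S : Set G.E) (e₀ : G.E)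
    (h : ∀ e ∈ S, Relation.ReflTransGen
      (fun a b => a ∈ S ∧ b ∈ S ∧ ∃ v, v ∈ G.ends a ∧ v ∈ G.ends b) e₀ e) :
    G.conn S := by
  intro e he f hf
  have hs : Symmetric (fun a b => a ∈ S ∧ b ∈ S ∧ ∃ v, v ∈ G.ends a ∧ v ∈ G.ends b) := by
    rintro a b ⟨ha, hb, v, hva, hvb⟩
    exact ⟨hb, ha, v, hvb, hva⟩
  exact ((@Relation.ReflTransGen.stdSymm _ _ ⟨fun _ _ h => hs h⟩).symm _ _ (h e he)).trans (h f hf)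

lemma step (G : SGraph) (S : Set G.E) {a b : G.E} (v : G.V) (ha : a ∈ S) (hb : b ∈ S)
    (hva : v ∈ G.ends a) (hvb : v ∈ G.ends b) :
    Relation.ReflTransGen
      (fun a b => a ∈ S ∧ b ∈ S ∧ ∃ v, v ∈ G.ends a ∧ v ∈ G.ends b) a b :=
  .single ⟨ha, hb, v, hva, hvb⟩

end SGraphProofAux

open SGraphProofAux

/-- In a hedgehog, the distinguished edges `e₁, e₂` are untied. -/
theorem stmt_5 (G : SGraph) (C : Set G.E) (e₁ e₂ : G.E) (h : G.IsHedgehog C e₁ e₂) :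
    G.Untied e₁ e₂ := by
  classical
  obtain ⟨x₁, x₂, x₃, y₁, y₂, c₁, c₂, c₃, a₁₂, a₁₃, a₂₁, a₂₃, hVnd, hVall, hEnd, hEall,
    hc₁, hc₂, hc₃, htri, he₁, ha₁₂, ha₁₃, ha₂₁, he₂, ha₂₃, hC⟩ := h
  simp only [List.nodup_cons, List.mem_cons, List.not_mem_nil, or_false, not_or,
    List.nodup_nil, and_true, List.mem_singleton] at hVnd hEnd
  obtain ⟨⟨hv12, hv13, hv14, hv15⟩, ⟨hv23, hv24, hv25⟩, ⟨hv34, hv35⟩, hv45, -⟩ := hVnd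
  obtain ⟨⟨n12, n13, n14, n15, n16, n17, n18, n19⟩, ⟨n23, n24, n25, n26, n27, n28, n29⟩,
    ⟨n34, n35, n36, n37, n38, n39⟩, ⟨n45, n46, n47, n48, n49⟩, ⟨n56, n57, n58, n59⟩,
    ⟨n67, n68, n69⟩, ⟨n78, n79⟩, n89, -⟩ := hEnd
  have m12 := Ne.symm n12
  have m13 := Ne.symm n13
  have m14 := Ne.symm n14
  have m15 := Ne.symm n15
  have m16 := Ne.symm n16
  have m17 := Ne.symm n17
  have m18 := Ne.symm n18
  have m19 := Ne.symm n19
  have m23 := Ne.symm n23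
  have m24 := Ne.symm n24
  have m25 := Ne.symm n25
  have m26 := Ne.symm n26
  have m27 := Ne.symm n27
  have m28 := Ne.symm n28
  have m29 := Ne.symm n29
  have m34 := Ne.symm n34
  have m35 := Ne.symm n35
  have m36 := Ne.symm n36
  have m37 := Ne.symm n37
  have m38 := Ne.symm n38
  have m39 := Ne.symm n39
  have m45 := Ne.symm n45
  have m46 := Ne.symm n46
  have m47 := Ne.symm n47
  have m48 := Ne.symm n48
  have m49 := Ne.symm n49
  have m56 := Ne.symm n56
  have m57 := Ne.symm n57
  have m58 := Ne.symm n58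
  have m59 := Ne.symm n59
  have m67 := Ne.symm n67
  have m68 := Ne.symm n68
  have m69 := Ne.symm n69
  have m78 := Ne.symm n78
  have m79 := Ne.symm n79
  have m89 := Ne.symm n89
  have w12 := Ne.symm hv12
  have w13 := Ne.symm hv13
  have w14 := Ne.symm hv14
  have w15 := Ne.symm hv15
  have w23 := Ne.symm hv23
  have w24 := Ne.symm hv24
  have w25 := Ne.symm hv25
  have w34 := Ne.symm hv34
  have w35 := Ne.symm hv35
  have w45 := Ne.symm hv45
  set FA : Finset G.E := {e₁, a₁₂, e₂, a₂₁} with hFA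
  set FB : Finset G.E := {e₁, a₁₃, c₂, e₂, a₂₁} with hFB
  set FD : Finset G.E := {e₁, a₁₂, e₂, a₂₃, c₃} with hFD
  set FF : Finset G.E := {e₁, c₁, e₂, a₂₃, a₁₃} with hFF
  have memv : ∀ v : G.V, v = x₁ ∨ v = x₂ ∨ v = x₃ ∨ v = y₁ ∨ v = y₂ := by
    intro v
    simpa using hVall v
  have degA : ∀ v, G.deg ↑FA v = 0 ∨ G.deg ↑FA v = 2 := by
    intro v
    rw [deg_coe]
    rcases memv v with rfl|rfl|rfl|rfl|rfl <;>
      simp [hFA, Finset.filter_insert, Finset.filter_singleton,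
        hc₁, hc₂, hc₃, he₁, ha₁₂, ha₁₃, ha₂₁, he₂, ha₂₃, Sym2.mem_iff,
        Finset.card_insert_of_notMem, Finset.mem_insert, Finset.mem_singleton,
        hv12, w12, hv13, w13, hv14, w14, hv15, w15, hv23, w23, hv24, w24, hv25, w25,
        hv34, w34, hv35, w35, hv45, w45,
        n45, m45, n47, m47, n49, m49, n57, m57, n59, m59, n79, m79]
  have degB : ∀ v, G.deg ↑FB v = 0 ∨ G.deg ↑FB v = 2 := by
    intro v
    rw [deg_coe]
    rcases memv v with rfl|rfl|rfl|rfl|rfl <;>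
      simp [hFB, Finset.filter_insert, Finset.filter_singleton,
        hc₁, hc₂, hc₃, he₁, ha₁₂, ha₁₃, ha₂₁, he₂, ha₂₃, Sym2.mem_iff,
        Finset.card_insert_of_notMem, Finset.mem_insert, Finset.mem_singleton,
        hv12, w12, hv13, w13, hv14, w14, hv15, w15, hv23, w23, hv24, w24, hv25, w25,
        hv34, w34, hv35, w35, hv45, w45,
        n24, m24, n26, m26, n27, m27, n29, m29, n46, m46, n47, m47, n49, m49,
        n67, m67, n69, m69, n79, m79]
  have degD : ∀ v, G.deg ↑FD v = 0 ∨ G.deg ↑FD v = 2 := by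
    intro v
    rw [deg_coe]
    rcases memv v with rfl|rfl|rfl|rfl|rfl <;>
      simp [hFD, Finset.filter_insert, Finset.filter_singleton,
        hc₁, hc₂, hc₃, he₁, ha₁₂, ha₁₃, ha₂₁, he₂, ha₂₃, Sym2.mem_iff,
        Finset.card_insert_of_notMem, Finset.mem_insert, Finset.mem_singleton,
        hv12, w12, hv13, w13, hv14, w14, hv15, w15, hv23, w23, hv24, w24, hv25, w25,
        hv34, w34, hv35, w35, hv45, w45,
        n34, m34, n35, m35, n38, m38, n39, m39, n45, m45, n48, m48, n49, m49,
        n58, m58, n59, m59, n89, m89]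
  have degF : ∀ v, G.deg ↑FF v = 0 ∨ G.deg ↑FF v = 2 := by
    intro v
    rw [deg_coe]
    rcases memv v with rfl|rfl|rfl|rfl|rfl <;>
      simp [hFF, Finset.filter_insert, Finset.filter_singleton,
        hc₁, hc₂, hc₃, he₁, ha₁₂, ha₁₃, ha₂₁, he₂, ha₂₃, Sym2.mem_iff,
        Finset.card_insert_of_notMem, Finset.mem_insert, Finset.mem_singleton,
        hv12, w12, hv13, w13, hv14, w14, hv15, w15, hv23, w23, hv24, w24, hv25, w25,
        hv34, w34, hv35, w35, hv45, w45,
        n14, m14, n16, m16, n18, m18, n19, m19, n46, m46, n48, m48, n49, m49,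
        n68, m68, n69, m69, n89, m89]
  have connA : G.conn ↑FA := by
    apply conn_of_base G _ e₁
    intro e he
    simp only [hFA, Finset.coe_insert, Set.mem_insert_iff, Finset.coe_singleton,
      Set.mem_singleton_iff] at he
    have s1 := step G (↑FA : Set G.E) (a := e₁) (b := a₁₂) y₁ (by simp [hFA]) (by simp [hFA])
      (by simp [he₁]) (by simp [ha₁₂])
    have s2 := step G (↑FA : Set G.E) (a := a₁₂) (b := e₂) x₂ (by simp [hFA]) (by simp [hFA])
      (by simp [ha₁₂]) (by simp [he₂])
    have s4 := step G (↑FA : Set G.E) (a := e₁) (b := a₂₁) x₁ (by simp [hFA]) (by simp [hFA])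
      (by simp [he₁]) (by simp [ha₂₁])
    rcases he with rfl|rfl|rfl|rfl
    · exact .refl
    · exact s1
    · exact s1.trans s2
    · exact s4
  have connB : G.conn ↑FB := by
    apply conn_of_base G _ e₁
    intro e he
    simp only [hFB, Finset.coe_insert, Set.mem_insert_iff, Finset.coe_singleton,
      Set.mem_singleton_iff] at he
    have s1 := step G (↑FB : Set G.E) (a := e₁) (b := a₁₃) y₁ (by simp [hFB]) (by simp [hFB])
      (by simp [he₁]) (by simp [ha₁₃])
    have s2 := step G (↑FB : Set G.E) (a := a₁₃) (b := c₂) x₃ (by simp [hFB]) (by simp [hFB])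
      (by simp [ha₁₃]) (by simp [hc₂])
    have s3 := step G (↑FB : Set G.E) (a := c₂) (b := e₂) x₂ (by simp [hFB]) (by simp [hFB])
      (by simp [hc₂]) (by simp [he₂])
    have s4 := step G (↑FB : Set G.E) (a := e₁) (b := a₂₁) x₁ (by simp [hFB]) (by simp [hFB])
      (by simp [he₁]) (by simp [ha₂₁])
    rcases he with rfl|rfl|rfl|rfl|rfl
    · exact .refl
    · exact s1
    · exact s1.trans s2
    · exact (s1.trans s2).trans s3
    · exact s4
  have connD : G.conn ↑FD := by
    apply conn_of_base G _ e₁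
    intro e he
    simp only [hFD, Finset.coe_insert, Set.mem_insert_iff, Finset.coe_singleton,
      Set.mem_singleton_iff] at he
    have s1 := step G (↑FD : Set G.E) (a := e₁) (b := a₁₂) y₁ (by simp [hFD]) (by simp [hFD])
      (by simp [he₁]) (by simp [ha₁₂])
    have s2 := step G (↑FD : Set G.E) (a := a₁₂) (b := e₂) x₂ (by simp [hFD]) (by simp [hFD])
      (by simp [ha₁₂]) (by simp [he₂])
    have s3 := step G (↑FD : Set G.E) (a := e₂) (b := a₂₃) y₂ (by simp [hFD]) (by simp [hFD])
      (by simp [he₂]) (by simp [ha₂₃])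
    have s4 := step G (↑FD : Set G.E) (a := e₁) (b := c₃) x₁ (by simp [hFD]) (by simp [hFD])
      (by simp [he₁]) (by simp [hc₃])
    rcases he with rfl|rfl|rfl|rfl|rfl
    · exact .refl
    · exact s1
    · exact s1.trans s2
    · exact (s1.trans s2).trans s3
    · exact s4
  have connF : G.conn ↑FF := by
    apply conn_of_base G _ e₁
    intro e he
    simp only [hFF, Finset.coe_insert, Set.mem_insert_iff, Finset.coe_singleton,
      Set.mem_singleton_iff] at he
    have s1 := step G (↑FF : Set G.E) (a := e₁) (b := c₁) x₁ (by simp [hFF]) (by simp [hFF])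
      (by simp [he₁]) (by simp [hc₁])
    have s2 := step G (↑FF : Set G.E) (a := c₁) (b := e₂) x₂ (by simp [hFF]) (by simp [hFF])
      (by simp [hc₁]) (by simp [he₂])
    have s3 := step G (↑FF : Set G.E) (a := e₂) (b := a₂₃) y₂ (by simp [hFF]) (by simp [hFF])
      (by simp [he₂]) (by simp [ha₂₃])
    have s4 := step G (↑FF : Set G.E) (a := e₁) (b := a₁₃) y₁ (by simp [hFF]) (by simp [hFF])
      (by simp [he₁]) (by simp [ha₁₃])
    rcases he with rfl|rfl|rfl|rfl|rfl
    · exact .refl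
    · exact s1
    · exact s1.trans s2
    · exact (s1.trans s2).trans s3
    · exact s4
  have cycA : G.IsCycle ↑FA := ⟨⟨e₁, by simp [hFA]⟩, degA, connA⟩
  have cycB : G.IsCycle ↑FB := ⟨⟨e₁, by simp [hFB]⟩, degB, connB⟩
  have cycD : G.IsCycle ↑FD := ⟨⟨e₁, by simp [hFD]⟩, degD, connD⟩
  have cycF : G.IsCycle ↑FF := ⟨⟨e₁, by simp [hFF]⟩, degF, connF⟩
  have sgnA : G.signOf ↑FA = G.sgn e₁ * G.sgn a₁₂ * G.sgn e₂ * G.sgn a₂₁ := by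
    rw [signOf_coe]
    simp [hFA, Finset.prod_insert, Finset.mem_insert, Finset.mem_singleton,
      n45, m45, n47, m47, n49, m49, n57, m57, n59, m59, n79, m79, mul_assoc]
  have sgnB : G.signOf ↑FB = G.sgn e₁ * G.sgn a₁₃ * G.sgn c₂ * G.sgn e₂ * G.sgn a₂₁ := by
    rw [signOf_coe]
    simp [hFB, Finset.prod_insert, Finset.mem_insert, Finset.mem_singleton,
      n24, m24, n26, m26, n27, m27, n29, m29, n46, m46, n47, m47, n49, m49,
      n67, m67, n69, m69, n79, m79, mul_assoc]
  have sgnD : G.signOf ↑FD = G.sgn e₁ * G.sgn a₁₂ * G.sgn e₂ * G.sgn a₂₃ * G.sgn c₃ := by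
    rw [signOf_coe]
    simp [hFD, Finset.prod_insert, Finset.mem_insert, Finset.mem_singleton,
      n34, m34, n35, m35, n38, m38, n39, m39, n45, m45, n48, m48, n49, m49,
      n58, m58, n59, m59, n89, m89, mul_assoc]
  have sgnF : G.signOf ↑FF = G.sgn e₁ * G.sgn c₁ * G.sgn e₂ * G.sgn a₂₃ * G.sgn a₁₃ := by
    rw [signOf_coe]
    simp [hFF, Finset.prod_insert, Finset.mem_insert, Finset.mem_singleton,
      n14, m14, n16, m16, n18, m18, n19, m19, n46, m46, n48, m48, n49, m49,
      n68, m68, n69, m69, n89, m89, mul_assoc]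
  have hsum : G.signOf ↑FA * G.signOf ↑FB * G.signOf ↑FD * G.signOf ↑FF = -1 := by
    rw [sgnA, sgnB, sgnD, sgnF]
    exact (keyprod (G.sgn e₁) (G.sgn a₁₂) (G.sgn e₂) (G.sgn a₂₁) (G.sgn a₁₃) (G.sgn c₂)
      (G.sgn a₂₃) (G.sgn c₃) (G.sgn c₁)).trans htri
  obtain ⟨hpos, hneg⟩ := both_signs _ _ _ _ hsum
  constructor
  · rcases hpos with h1|h1|h1|h1
    · exact ⟨↑FA, cycA, by simp [hFA], by simp [hFA], h1⟩
    · exact ⟨↑FB, cycB, by simp [hFB], by simp [hFB], h1⟩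
    · exact ⟨↑FD, cycD, by simp [hFD], by simp [hFD], h1⟩
    · exact ⟨↑FF, cycF, by simp [hFF], by simp [hFF], h1⟩
  · rcases hneg with h1|h1|h1|h1
    · exact ⟨↑FA, cycA, by simp [hFA], by simp [hFA], h1⟩
    · exact ⟨↑FB, cycB, by simp [hFB], by simp [hFB], h1⟩
    · exact ⟨↑FD, cycD, by simp [hFD], by simp [hFD], h1⟩
    · exact ⟨↑FF, cycF, by simp [hFF], by simp [hFF], h1⟩
end
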